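/- arXiv:2012.05451 — 6 statements merged into one kernel-verified Lean document; each statement's English description precedes it below -/
import Mathlib

section
/- Fix d ≥ 1 and ε ∈ (0,1). Suppose ĥ : [0,1] → [log ε, 0] satisfies |ĥ(x) - max(log x, log ε)| ≤ ε/d for all x ∈ [ε,1] and ĥ(x) = log ε for x ∈ [0,ε], and suppose ĝ : ℝ_{≤0} → [0,1] satisfies |ĝ(y) - e^y| ≤ ε for all y ≤ 0. Define φ̂(x₁,…,x_d) = ĝ(Σ_{i=1}^d ĥ(x_i)). Then for ε sufficiently small, |φ̂(x) - Π_{i=1}^d x_i| ≤ 3ε for all x ∈ [0,1]^d. -/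
open Set

private lemma exp_lip_aux {a b : ℝ} (ha : a ≤ 0) (hb : b ≤ 0) :
    |Real.exp a - Real.exp b| ≤ |a - b| := by
  wlog hab : b ≤ a generalizing a b
  · rw [abs_sub_comm, abs_sub_comm a b]; exact this hb ha (le_of_not_ge hab)
  rw [abs_of_nonneg (sub_nonneg.2 (Real.exp_le_exp.2 hab)),
    abs_of_nonneg (sub_nonneg.2 hab)]
  have h1 : (b - a) + 1 ≤ Real.exp (b - a) := Real.add_one_le_exp _
  have h2 : Real.exp (b - a) * Real.exp a = Real.exp b := by
    rw [← Real.exp_add]; ring_nf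
  have h3 : 0 < Real.exp a := Real.exp_pos a
  have h4 : Real.exp a ≤ 1 := Real.exp_le_one_iff.2 ha
  nlinarith

/-- The two-layer construction `ĝ(∑ ĥ(xᵢ))`, with `ĥ` an `ε/d`-approximation of the
truncated logarithm and `ĝ` an `ε`-approximation of the exponential, approximates the
product `∏ xᵢ` within `3ε` on `[0,1]^d`, for `ε` sufficiently small. -/
theorem stmt5 (d : ℕ) (hd : 1 ≤ d) :
    ∃ ε₀ : ℝ, 0 < ε₀ ∧
      ∀ (ε : ℝ) (h g : ℝ → ℝ), 0 < ε → ε < ε₀ → ε < 1 →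
        (∀ t ∈ Icc (0 : ℝ) 1, h t ∈ Icc (Real.log ε) 0) →
        (∀ t ∈ Icc ε 1, |h t - max (Real.log t) (Real.log ε)| ≤ ε / d) →
        (∀ t ∈ Icc (0 : ℝ) ε, h t = Real.log ε) →
        (∀ y : ℝ, y ≤ 0 → g y ∈ Icc (0 : ℝ) 1 ∧ |g y - Real.exp y| ≤ ε) →
        ∀ x : Fin d → ℝ, (∀ i, x i ∈ Icc (0 : ℝ) 1) →
          |g (∑ i, h (x i)) - ∏ i, x i| ≤ 3 * ε := by
  refine ⟨1, one_pos, ?_⟩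
  intro ε h g hε _ hε1 hrange happrox htrunc hg x hx
  have hd0 : (0:ℝ) < d := by exact_mod_cast Nat.lt_of_lt_of_le Nat.zero_lt_one hd
  set S := ∑ i, h (x i) with hSdef
  have hS0 : S ≤ 0 := Finset.sum_nonpos fun i _ => (hrange (x i) (hx i)).2
  obtain ⟨_, hgexp⟩ := hg S hS0
  have hprodnn : 0 ≤ ∏ i, x i := Finset.prod_nonneg fun i _ => (hx i).1
  have key : |Real.exp S - ∏ i, x i| ≤ ε := by
    by_cases hcase : ∀ i, ε ≤ x i
    · have hxpos : ∀ i, 0 < x i := fun i => lt_of_lt_of_le hε (hcase i)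
      have hprod : ∏ i, x i = Real.exp (∑ i, Real.log (x i)) := by
        rw [Real.exp_sum]
        exact Finset.prod_congr rfl fun i _ => (Real.exp_log (hxpos i)).symm
      have hT0 : ∑ i, Real.log (x i) ≤ 0 :=
        Finset.sum_nonpos fun i _ => Real.log_nonpos (hxpos i).le (hx i).2
      have hdist : |S - ∑ i, Real.log (x i)| ≤ ε := by
        rw [hSdef, ← Finset.sum_sub_distrib]
        calc |∑ i, (h (x i) - Real.log (x i))|
            ≤ ∑ i : Fin d, |h (x i) - Real.log (x i)| := Finset.abs_sum_le_sum_abs _ _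
          _ ≤ ∑ _i : Fin d, ε / d := by
              refine Finset.sum_le_sum fun i _ => ?_
              have hmax : max (Real.log (x i)) (Real.log ε) = Real.log (x i) :=
                max_eq_left (Real.log_le_log hε (hcase i))
              have := happrox (x i) ⟨hcase i, (hx i).2⟩
              rwa [hmax] at this
          _ = ε := by
              rw [Finset.sum_const, Finset.card_univ, Fintype.card_fin, nsmul_eq_mul]
              field_simp
      rw [hprod]
      exact le_trans (exp_lip_aux hS0 hT0) hdist
    · push_neg at hcase
      obtain ⟨j, hj⟩ := hcase
      have hprodle : ∏ i, x i ≤ ε := by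
        have h1 : ∏ i, x i = x j * ∏ i ∈ Finset.univ.erase j, x i :=
          (Finset.mul_prod_erase _ _ (Finset.mem_univ j)).symm
        have h2 : ∏ i ∈ Finset.univ.erase j, x i ≤ 1 :=
          Finset.prod_le_one (fun i _ => (hx i).1) (fun i _ => (hx i).2)
        have h3 : 0 ≤ ∏ i ∈ Finset.univ.erase j, x i :=
          Finset.prod_nonneg fun i _ => (hx i).1
        calc ∏ i, x i = x j * ∏ i ∈ Finset.univ.erase j, x i := h1
          _ ≤ x j * 1 := by nlinarith [(hx j).1]
          _ ≤ ε := by linarith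
      have hexple : Real.exp S ≤ ε := by
        have hSsplit : S = h (x j) + ∑ i ∈ Finset.univ.erase j, h (x i) :=
          (Finset.add_sum_erase _ _ (Finset.mem_univ j)).symm
        have hhj : h (x j) = Real.log ε := htrunc (x j) ⟨(hx j).1, hj.le⟩
        have hrest : ∑ i ∈ Finset.univ.erase j, h (x i) ≤ 0 :=
          Finset.sum_nonpos fun i _ => (hrange (x i) (hx i)).2
        have : S ≤ Real.log ε := by rw [hSsplit, hhj]; linarith
        calc Real.exp S ≤ Real.exp (Real.log ε) := Real.exp_le_exp.2 this
          _ = ε := Real.exp_log hε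
      rw [abs_sub_le_iff]
      constructor <;> linarith [Real.exp_pos S, hprodnn]
  calc |g S - ∏ i, x i| ≤ |g S - Real.exp S| + |Real.exp S - ∏ i, x i| := abs_sub_le _ _ _
    _ ≤ ε + ε := add_le_add hgexp key
    _ ≤ 3 * ε := by linarith
end

section
/- Let σ : ℝ → ℝ be a function with a horizontal asymptote at -∞ (σ bounded on ℝ_{≤0}) and an affine asymptote b·x + c at +∞ with b > 0 (i.e., x ↦ σ(x) - bx is bounded on ℝ_{≥0}). Then for every ε > 0 there exists M > 0 such that |σ(Mx)/(Mb) - max(x,0)| ≤ ε for all x ∈ ℝ. -/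
open Set

/-- A scaled ReLU-like activation approximates the ReLU function uniformly on `ℝ`. -/
theorem stmt8 (σ : ℝ → ℝ) (b : ℝ) (hb : 0 < b)
    (hneg : ∃ C : ℝ, ∀ x ≤ (0 : ℝ), |σ x| ≤ C)
    (hpos : ∃ C : ℝ, ∀ x ≥ (0 : ℝ), |σ x - b * x| ≤ C)
    (ε : ℝ) (hε : 0 < ε) :
    ∃ M : ℝ, 0 < M ∧ ∀ x : ℝ, |σ (M * x) / (M * b) - max x 0| ≤ ε := by
  obtain ⟨C₁, h₁⟩ := hneg
  obtain ⟨C₂, h₂⟩ := hpos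
  set C : ℝ := max C₁ C₂ with hC
  have hC0 : 0 ≤ C := le_trans (abs_nonneg (σ 0)) (le_trans (h₁ 0 le_rfl) (le_max_left _ _))
  set M : ℝ := (C + 1) / (b * ε) with hM
  have hM0 : 0 < M := div_pos (by linarith) (mul_pos hb hε)
  have hMb : 0 < M * b := mul_pos hM0 hb
  have hkey : C / (M * b) ≤ ε := by
    rw [div_le_iff₀ hMb, hM]
    have h : (C + 1) / (b * ε) * b * ε = C + 1 := by field_simp
    linarith [h]
  refine ⟨M, hM0, fun x => ?_⟩
  rcases le_or_gt x 0 with hx | hx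
  · rw [max_eq_right hx]
    have h : |σ (M * x)| ≤ C :=
      le_trans (h₁ _ (mul_nonpos_of_nonneg_of_nonpos hM0.le hx)) (le_max_left _ _)
    calc |σ (M * x) / (M * b) - 0| = |σ (M * x)| / (M * b) := by
          rw [sub_zero, abs_div, abs_of_pos hMb]
      _ ≤ C / (M * b) := by gcongr
      _ ≤ ε := hkey
  · rw [max_eq_left hx.le]
    have hMx : 0 ≤ M * x := le_of_lt (mul_pos hM0 hx)
    have h : |σ (M * x) - b * (M * x)| ≤ C := le_trans (h₂ _ hMx) (le_max_right _ _)
    have heq : σ (M * x) / (M * b) - x = (σ (M * x) - b * (M * x)) / (M * b) := by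
      field_simp
    calc |σ (M * x) / (M * b) - x| = |σ (M * x) - b * (M * x)| / (M * b) := by
          rw [heq, abs_div, abs_of_pos hMb]
      _ ≤ C / (M * b) := by gcongr
      _ ≤ ε := hkey
end

section
/- For the truncated logarithm f(x) = log x on [δ,1] with 0 < δ < 1, consider the subdivision x_k = exp(log δ + k·ε̃) for k = 0,…,m with ε̃ = log(1 + √(2ε)) and m = ⌊(1/ε̃)·log(1/δ)⌋, completed with x_{m+1} = 1. Then the continuous piecewise affine interpolant of log on this subdivision approximates log within ε in sup norm on [δ,1]. -/
open Set

noncomputable def chordFn (a b t : ℝ) : ℝ :=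
  Real.log a + (t - a) * (Real.log b - Real.log a) / (b - a)

lemma chordFn_left (a b : ℝ) : chordFn a b a = Real.log a := by simp [chordFn]

lemma chordFn_right (a b : ℝ) (hab : a ≠ b) : chordFn a b b = Real.log b := by
  have h : b - a ≠ 0 := sub_ne_zero.2 (Ne.symm hab)
  rw [chordFn, mul_div_cancel_left₀ _ h]; ring

lemma chordFn_affine (a b : ℝ) :
    ∀ t, chordFn a b t = ((Real.log b - Real.log a) / (b - a)) * t +
      (Real.log a - a * ((Real.log b - Real.log a) / (b - a))) := by
  intro t
  simp only [chordFn, mul_div_assoc]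
  ring

lemma log_sub_log_le (u w : ℝ) (hu : 0 < u) (hw : 0 < w) :
    Real.log u - Real.log w ≤ (u - w) / w := by
  have h := Real.log_le_sub_one_of_pos (div_pos hu hw)
  rw [Real.log_div hu.ne' hw.ne'] at h
  rw [sub_div, div_self hw.ne']
  linarith

lemma chord_err (ε a b t : ℝ) (hε : 0 < ε) (ha : 0 < a) (hab : a < b)
    (hb : b ≤ a * (1 + Real.sqrt (2 * ε)))
    (hat : a ≤ t) (htb : t ≤ b) :
    |chordFn a b t - Real.log t| ≤ ε := by
  set s := Real.sqrt (2 * ε) with hs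
  have hs2 : s ^ 2 = 2 * ε := Real.sq_sqrt (by linarith)
  have hs0 : 0 ≤ s := Real.sqrt_nonneg _
  have ht : 0 < t := lt_of_lt_of_le ha hat
  have hb0 : 0 < b := lt_trans ha hab
  have hba : 0 < b - a := sub_pos.2 hab
  have hbsa : b - a ≤ s * a := by linarith
  set D := Real.log b - Real.log a with hD
  -- lower bound via concavity
  have hlow : chordFn a b t ≤ Real.log t := by
    have h1 : (0:ℝ) ≤ (b - t) / (b - a) := div_nonneg (by linarith) hba.le
    have h2 : (0:ℝ) ≤ (t - a) / (b - a) := div_nonneg (by linarith) hba.le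
    have h3 : (b - t) / (b - a) + (t - a) / (b - a) = 1 := by field_simp; ring
    have hc := (strictConcaveOn_log_Ioi.concaveOn).2 (mem_Ioi.2 ha) (mem_Ioi.2 hb0) h1 h2 h3
    simp only [smul_eq_mul] at hc
    have hcomb : (b - t) / (b - a) * a + (t - a) / (b - a) * b = t := by
      field_simp; ring
    rw [hcomb] at hc
    have heq : chordFn a b t = (b - t) / (b - a) * Real.log a + (t - a) / (b - a) * Real.log b := by
      simp only [chordFn]
      field_simp
      ring
    linarith [heq ▸ hc]
  -- upper bound
  have e1 := log_sub_log_le t a ht ha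
  have e2 := log_sub_log_le t b ht hb0
  have e3 := log_sub_log_le a b ha hb0
  have e4 := log_sub_log_le b a hb0 ha
  have hup : Real.log t - chordFn a b t ≤ ε := by
    rcases le_or_gt (t - a) ((b - a) / 2) with hcase | hcase
    · -- use left endpoint
      have hD1 : b - a ≤ D * b := (div_le_iff₀ hb0).1 (show (b - a) / b ≤ D by
        have hr : (a - b) / b = -((b - a) / b) := by ring
        rw [hD]; linarith [hr ▸ e3])
      have hQ : (t - a) / b ≤ (t - a) * D / (b - a) := by
        rw [div_le_div_iff₀ hb0 hba]
        calc (t - a) * (b - a) ≤ (t - a) * (D * b) :=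
              mul_le_mul_of_nonneg_left hD1 (by linarith)
          _ = (t - a) * D * b := by ring
      have hfinal : (t - a) / a - (t - a) / b ≤ ε := by
        have heq2 : (t - a) / a - (t - a) / b = (t - a) * (b - a) / (a * b) := by
          field_simp
        rw [heq2, div_le_iff₀ (by positivity)]
        have h1 : (b - a) * (b - a) ≤ (s * a) * (s * a) :=
          mul_le_mul hbsa hbsa hba.le (by positivity)
        have h2 : (s * a) * (s * a) = 2 * ε * (a * a) := by rw [← hs2]; ring
        have h3 : ε * (a * a) ≤ ε * (a * b) :=
          mul_le_mul_of_nonneg_left (mul_le_mul_of_nonneg_left hab.le ha.le) hε.le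
        have h4 : (t - a) * (b - a) ≤ ((b - a) / 2) * (b - a) :=
          mul_le_mul_of_nonneg_right hcase hba.le
        linarith [h1, h2, h3, h4]
      simp only [chordFn]
      linarith
    · -- use right endpoint
      have hRb : chordFn a b t = Real.log b - (b - t) * D / (b - a) := by
        simp only [chordFn]
        field_simp
        ring
      have hD2 : D * a ≤ b - a := (le_div_iff₀ ha).1 (show D ≤ (b - a) / a by rw [hD]; exact e4)
      have hQ : (b - t) * D / (b - a) ≤ (b - t) / a := by
        rw [div_le_div_iff₀ hba ha]
        calc (b - t) * D * a = (b - t) * (D * a) := by ring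
          _ ≤ (b - t) * (b - a) := mul_le_mul_of_nonneg_left hD2 (by linarith)
      have hfinal : (t - b) / b + (b - t) / a ≤ ε := by
        have heq2 : (t - b) / b + (b - t) / a = (b - t) * (b - a) / (a * b) := by
          field_simp; ring
        rw [heq2, div_le_iff₀ (by positivity)]
        have h1 : (b - a) * (b - a) ≤ (s * a) * (s * a) :=
          mul_le_mul hbsa hbsa hba.le (by positivity)
        have h2 : (s * a) * (s * a) = 2 * ε * (a * a) := by rw [← hs2]; ring
        have h3 : ε * (a * a) ≤ ε * (a * b) :=
          mul_le_mul_of_nonneg_left (mul_le_mul_of_nonneg_left hab.le ha.le) hε.le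
        have h4 : (b - t) * (b - a) ≤ ((b - a) / 2) * (b - a) :=
          mul_le_mul_of_nonneg_right (by linarith) hba.le
        linarith [h1, h2, h3, h4]
      rw [hRb]
      linarith
  rw [abs_le]
  constructor <;> linarith


/-- The piecewise affine interpolant of `log` on the geometric subdivision
`x_k = exp(log δ + k·ε̃)`, `ε̃ = log(1+√(2ε))`, `m = ⌊(1/ε̃)·log(1/δ)⌋`, completed with
`x_{m+1} = 1`, approximates `log` within `ε` in sup norm on `[δ,1]`. -/
theorem stmt9 (δ ε : ℝ) (hδ0 : 0 < δ) (hδ1 : δ < 1) (hε : 0 < ε) :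
    let et : ℝ := Real.log (1 + Real.sqrt (2 * ε))
    let m : ℕ := ⌊(1 / et) * Real.log (1 / δ)⌋₊
    let x : ℕ → ℝ := fun k => if k ≤ m then Real.exp (Real.log δ + k * et) else 1
    ∃ g : ℝ → ℝ,
      (∀ k ≤ m + 1, g (x k) = Real.log (x k)) ∧
      (∀ k ≤ m, ∃ A B : ℝ, ∀ t ∈ Icc (x k) (x (k + 1)), g t = A * t + B) ∧
      ∀ t ∈ Icc δ 1, |g t - Real.log t| ≤ ε := by
  intro et m x
  have hs0 : 0 < Real.sqrt (2 * ε) := Real.sqrt_pos.2 (by linarith)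
  have het : 0 < et := Real.log_pos (by linarith)
  have hxdef : ∀ k, x k = if k ≤ m then Real.exp (Real.log δ + k * et) else 1 := fun k => rfl
  have hmdef : m = ⌊(1 / et) * Real.log (1 / δ)⌋₊ := rfl
  have hlogδ : Real.log δ < 0 := Real.log_neg hδ0 hδ1
  have hlog1δ : Real.log (1 / δ) = -Real.log δ := by rw [one_div, Real.log_inv]
  have hm_le : (m : ℝ) * et ≤ -Real.log δ := by
    have h0 : 0 ≤ (1 / et) * Real.log (1 / δ) := by
      apply mul_nonneg (by positivity)
      rw [hlog1δ]; linarith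
    have := Nat.floor_le h0
    rw [← hmdef] at this
    rw [← hlog1δ]
    calc (m : ℝ) * et ≤ ((1 / et) * Real.log (1 / δ)) * et := by
          exact mul_le_mul_of_nonneg_right this het.le
      _ = Real.log (1 / δ) := by field_simp
  have hm1 : -Real.log δ < ((m : ℝ) + 1) * et := by
    have := Nat.lt_floor_add_one ((1 / et) * Real.log (1 / δ))
    rw [← hmdef] at this
    have h2 : Real.log (1 / δ) < ((m : ℝ) + 1) * et := by
      calc Real.log (1 / δ) = ((1 / et) * Real.log (1 / δ)) * et := by field_simp
        _ < ((m : ℝ) + 1) * et := by exact mul_lt_mul_of_pos_right this het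
    rwa [hlog1δ] at h2
  have hx_pos : ∀ k, 0 < x k := by
    intro k; rw [hxdef]; split
    · exact Real.exp_pos _
    · exact one_pos
  have hxk : ∀ k ≤ m, x k = Real.exp (Real.log δ + k * et) := by
    intro k hk; rw [hxdef, if_pos hk]
  have hxm1 : x (m + 1) = 1 := by rw [hxdef, if_neg (by omega)]
  have hlogxk : ∀ k ≤ m, Real.log (x k) = Real.log δ + k * et := by
    intro k hk; rw [hxk k hk, Real.log_exp]
  have hexp_et : Real.exp et = 1 + Real.sqrt (2 * ε) := Real.exp_log (by linarith)
  -- ratio bounds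
  have hratio_lt : ∀ k < m, x (k + 1) = x k * (1 + Real.sqrt (2 * ε)) := by
    intro k hk
    rw [hxk k hk.le, hxk (k + 1) (by omega), ← hexp_et, ← Real.exp_add]
    push_cast; ring_nf
  have hratio_m : (1 : ℝ) ≤ x m * (1 + Real.sqrt (2 * ε)) := by
    rw [hxk m le_rfl, ← hexp_et, ← Real.exp_add]
    apply Real.one_le_exp
    push_cast at hm1 ⊢
    linarith
  have hxm_le_one : x m ≤ 1 := by
    rw [hxk m le_rfl]
    exact Real.exp_le_one_iff.2 (by linarith)
  -- the index function
  set K : ℝ → ℕ := fun t => min m ⌊(Real.log t - Real.log δ) / et⌋₊ with hK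
  have hKspec : ∀ k ≤ m, ∀ t : ℝ, Real.log δ + k * et ≤ Real.log t →
      (k = m ∨ Real.log t < Real.log δ + (k + 1) * et) → K t = k := by
    intro k hk t hlo hhi
    have hv : (k : ℝ) ≤ (Real.log t - Real.log δ) / et := by
      rw [le_div_iff₀ het]; linarith
    have h1 : k ≤ ⌊(Real.log t - Real.log δ) / et⌋₊ := Nat.le_floor hv
    refine le_antisymm ?_ (le_min hk h1)
    rcases hhi with rfl | hhi
    · exact min_le_left _ _
    · have hv0 : (0:ℝ) ≤ (Real.log t - Real.log δ) / et := le_trans (by positivity) hv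
      have : ⌊(Real.log t - Real.log δ) / et⌋₊ < k + 1 := by
        rw [Nat.floor_lt hv0]
        push_cast
        rw [div_lt_iff₀ het]
        linarith
      exact le_trans (min_le_right _ _) (by omega)
  refine ⟨fun t => chordFn (x (K t)) (x (K t + 1)) t, ?_, ?_, ?_⟩
  · -- interpolation at nodes
    have hnode : ∀ k ≤ m, K (x k) = k := by
      intro k hk
      apply hKspec k hk
      · rw [hlogxk k hk]
      · rcases eq_or_lt_of_le hk with rfl | hlt
        · exact Or.inl rfl
        · right; rw [hlogxk k hk]; push_cast; nlinarith [het]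
    intro k hk
    rcases le_or_gt k m with hkm | hkm
    · show chordFn (x (K (x k))) (x (K (x k) + 1)) (x k) = Real.log (x k)
      rw [hnode k hkm, chordFn_left]
    · have hk1 : k = m + 1 := by omega
      subst hk1
      show chordFn (x (K (x (m+1)))) (x (K (x (m+1)) + 1)) (x (m+1)) = Real.log (x (m+1))
      have hK1 : K (x (m + 1)) = m := by
        rw [hxm1]
        apply hKspec m le_rfl
        · rw [Real.log_one]; push_cast; linarith
        · exact Or.inl rfl
      rw [hK1, hxm1]
      rcases eq_or_lt_of_le hxm_le_one with he | hlt
      · rw [he, chordFn_left]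
      · exact chordFn_right _ _ (ne_of_lt hlt)
  · -- piecewise affine
    intro k hk
    refine ⟨(Real.log (x (k+1)) - Real.log (x k)) / (x (k+1) - x k),
      Real.log (x k) - x k * ((Real.log (x (k+1)) - Real.log (x k)) / (x (k+1) - x k)), ?_⟩
    intro t ht
    rw [← chordFn_affine]
    obtain ⟨ht1, ht2⟩ := ht
    have hxt : 0 < t := lt_of_lt_of_le (hx_pos k) ht1
    have hKt : K t = k ∨ (t = x (k + 1) ∧ k < m) := by
      rcases lt_or_eq_of_le ht2 with hlt | heq
      · left
        apply hKspec k hk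
        · rw [← hlogxk k hk]
          exact Real.log_le_log (hx_pos k) ht1
        · rcases eq_or_lt_of_le hk with rfl | hkm
          · exact Or.inl rfl
          · right
            have hll := Real.log_lt_log hxt hlt
            rw [hlogxk (k+1) (by omega)] at hll
            push_cast at hll
            exact hll
      · rcases eq_or_lt_of_le hk with he | hkm
        · left
          apply hKspec k hk
          · rw [← hlogxk k hk]
            exact Real.log_le_log (hx_pos k) ht1
          · exact Or.inl he
        · exact Or.inr ⟨heq, hkm⟩
    rcases hKt with hKt | ⟨rfl, hkm⟩
    · show chordFn (x (K t)) (x (K t + 1)) t = chordFn (x k) (x (k+1)) t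
      rw [hKt]
    · -- endpoint t = x (k+1), k < m
      have hK2 : K (x (k+1)) = k + 1 := by
        apply hKspec (k+1) (by omega)
        · rw [hlogxk (k+1) (by omega)]
        · rcases eq_or_lt_of_le (show k + 1 ≤ m by omega) with he | hlt
          · exact Or.inl he
          · right
            rw [hlogxk (k+1) (by omega)]
            push_cast
            nlinarith [het]
      show chordFn (x (K (x (k+1)))) (x (K (x (k+1)) + 1)) (x (k+1)) = chordFn (x k) (x (k+1)) (x (k+1))
      rw [hK2, chordFn_left, chordFn_right]
      have := hratio_lt k hkm
      have := hx_pos k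
      intro hcon
      nlinarith [hs0]
  · -- error bound
    intro t ht
    obtain ⟨ht1, ht2⟩ := ht
    have hxt : 0 < t := lt_of_lt_of_le hδ0 ht1
    set k := K t with hk
    have hkm : k ≤ m := min_le_left _ _
    have hv0 : (0:ℝ) ≤ (Real.log t - Real.log δ) / et := by
      apply div_nonneg _ het.le
      have := Real.log_le_log hδ0 ht1
      linarith
    have hlo : x k ≤ t := by
      rw [hxk k hkm, ← Real.exp_log hxt]
      apply Real.exp_le_exp.2
      have hfl : (k : ℝ) ≤ (Real.log t - Real.log δ) / et := by
        have h1 : (k : ℝ) ≤ (⌊(Real.log t - Real.log δ) / et⌋₊ : ℝ) := by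
          exact_mod_cast min_le_right m _
        exact le_trans h1 (Nat.floor_le hv0)
      rw [le_div_iff₀ het] at hfl
      linarith
    have hhi : t ≤ x (k + 1) := by
      rcases eq_or_lt_of_le hkm with he | hlt
      · rw [he, hxm1]; exact ht2
      · have hfl : ⌊(Real.log t - Real.log δ) / et⌋₊ = k := by
          have hkdef : k = min m ⌊(Real.log t - Real.log δ) / et⌋₊ := hk
          rcases le_total ⌊(Real.log t - Real.log δ) / et⌋₊ m with h | h
          · rw [min_eq_right h] at hkdef; exact hkdef.symm
          · rw [min_eq_left h] at hkdef; exact absurd hkdef (Nat.ne_of_lt hlt)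
        have h2 : (Real.log t - Real.log δ) / et < (k : ℝ) + 1 := by
          have := Nat.lt_floor_add_one ((Real.log t - Real.log δ) / et)
          rw [hfl] at this
          exact_mod_cast this
        rw [div_lt_iff₀ het] at h2
        rw [hxk (k+1) (by omega), ← Real.exp_log hxt]
        apply Real.exp_le_exp.2
        push_cast
        linarith
    show |chordFn (x k) (x (k + 1)) t - Real.log t| ≤ ε
    rcases eq_or_lt_of_le (le_trans hlo hhi : x k ≤ x (k+1)) with he | hablt
    · -- degenerate: x k = x (k+1), forces t = x k
      have htk : t = x k := le_antisymm (he ▸ hhi) hlo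
      rw [htk, chordFn_left, sub_self, abs_zero]
      exact hε.le
    · apply chord_err ε (x k) (x (k+1)) t hε (hx_pos k) hablt _ hlo hhi
      rcases eq_or_lt_of_le hkm with he | hlt
      · rw [he, hxm1]
        exact hratio_m
      · rw [hratio_lt k hlt]
end

section
/- Let f : [a,b] → ℝ be C² with f'' continuous, and let μ > 0, ε > 0 sufficiently small. Then there exists a continuous piecewise affine function g with at most (1+μ)·(∫_a^b √|f''(t)| dt)/√(2ε) + K pieces (for some partition-dependent constant K absorbed for small ε) satisfying ‖f - g‖_∞ ≤ ε; in particular the number of pieces is at most (1+μ)·(∫_a^b √|f''|)/√(2ε) for ε small enough. -/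
open Set

private lemma union_closed_cont {f : ℝ → ℝ} {s t : Set ℝ} (hs : IsClosed s) (ht : IsClosed t)
    (hfs : ContinuousOn f s) (hft : ContinuousOn f t) : ContinuousOn f (s ∪ t) := by
  intro x hx
  have h1 : ContinuousWithinAt f s x := by
    by_cases hxs : x ∈ s
    · exact hfs x hxs
    · exact continuousWithinAt_of_notMem_closure (by rwa [hs.closure_eq])
  have h2 : ContinuousWithinAt f t x := by
    by_cases hxt : x ∈ t
    · exact hft x hxt
    · exact continuousWithinAt_of_notMem_closure (by rwa [ht.closure_eq])
  exact h1.union h2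

private lemma lip_aux {f' f'' : ℝ → ℝ} {u v M : ℝ}
    (hf'' : ∀ t ∈ Icc u v, HasDerivAt f' (f'' t) t)
    (hM : ∀ t ∈ Icc u v, |f'' t| ≤ M) :
    ∀ s ∈ Icc u v, ∀ t ∈ Icc u v, |f' t - f' s| ≤ M * |t - s| := by
  intro s hs t ht
  have := (convex_Icc u v).norm_image_sub_le_of_norm_hasDerivWithin_le
    (fun z hz => (hf'' z hz).hasDerivWithinAt)
    (fun z hz => by simpa [Real.norm_eq_abs] using hM z hz) hs ht
  simpa [Real.norm_eq_abs] using this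

private lemma taylor_aux {f f' f'' : ℝ → ℝ} {u v M : ℝ}
    (hf' : ∀ t ∈ Icc u v, HasDerivAt f (f' t) t)
    (hf'' : ∀ t ∈ Icc u v, HasDerivAt f' (f'' t) t)
    (hM : ∀ t ∈ Icc u v, |f'' t| ≤ M)
    {x y : ℝ} (hx : x ∈ Icc u v) (hy : y ∈ Icc u v) :
    |f y - f x - f' x * (y - x)| ≤ M * (y - x) ^ 2 / 2 := by
  have hcf' : ContinuousOn f' (Icc u v) := fun t ht =>
    (hf'' t ht).continuousAt.continuousWithinAt
  have hsub : Set.uIcc x y ⊆ Icc u v := by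
    rw [Set.uIcc_eq_union]
    rintro t (ht | ht)
    · exact ⟨hx.1.trans ht.1, ht.2.trans hy.2⟩
    · exact ⟨hy.1.trans ht.1, ht.2.trans hx.2⟩
  have hint : IntervalIntegrable f' MeasureTheory.volume x y :=
    (hcf'.mono hsub).intervalIntegrable
  have hftc : ∫ t in x..y, f' t = f y - f x :=
    intervalIntegral.integral_eq_sub_of_hasDerivAt (fun t ht => hf' t (hsub ht)) hint
  have key : f y - f x - f' x * (y - x) = ∫ t in x..y, (f' t - f' x) := by
    rw [intervalIntegral.integral_sub hint intervalIntegrable_const, hftc,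
      intervalIntegral.integral_const, smul_eq_mul]
    ring
  rcases le_total x y with hxy | hxy
  · have hb : ∀ t ∈ Icc x y, |f' t - f' x| ≤ M * (t - x) := by
      intro t ht
      have htuv : t ∈ Icc u v := ⟨hx.1.trans ht.1, ht.2.trans hy.2⟩
      have := lip_aux hf'' hM x hx t htuv
      have habs : |t - x| = t - x := abs_of_nonneg (by linarith [ht.1])
      rwa [habs] at this
    have hint2 : IntervalIntegrable (fun t => |f' t - f' x|) MeasureTheory.volume x y :=
      ((hcf'.mono hsub).sub continuousOn_const).abs.intervalIntegrable
    have hint3 : IntervalIntegrable (fun t => M * (t - x)) MeasureTheory.volume x y :=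
      (Continuous.intervalIntegrable (by continuity) x y)
    have h1 : |∫ t in x..y, (f' t - f' x)| ≤ ∫ t in x..y, |f' t - f' x| :=
      intervalIntegral.abs_integral_le_integral_abs hxy
    have h2 : (∫ t in x..y, |f' t - f' x|) ≤ ∫ t in x..y, M * (t - x) :=
      intervalIntegral.integral_mono_on hxy hint2 hint3 hb
    have h3 : (∫ t in x..y, M * (t - x)) = M * (y - x) ^ 2 / 2 := by
      rw [intervalIntegral.integral_const_mul]
      have : (∫ t in x..y, (t - x)) = (y - x) ^ 2 / 2 := by
        rw [intervalIntegral.integral_sub intervalIntegral.intervalIntegrable_id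
          intervalIntegrable_const, integral_id, intervalIntegral.integral_const, smul_eq_mul]
        ring
      rw [this]; ring
    rw [key]
    calc |∫ t in x..y, (f' t - f' x)| ≤ ∫ t in x..y, |f' t - f' x| := h1
      _ ≤ ∫ t in x..y, M * (t - x) := h2
      _ = M * (y - x) ^ 2 / 2 := h3
  · have hb : ∀ t ∈ Icc y x, |f' t - f' x| ≤ M * (x - t) := by
      intro t ht
      have htuv : t ∈ Icc u v := ⟨hy.1.trans ht.1, ht.2.trans hx.2⟩
      have := lip_aux hf'' hM x hx t htuv
      have habs : |t - x| = x - t := by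
        rw [abs_sub_comm]; exact abs_of_nonneg (by linarith [ht.2])
      rwa [habs] at this
    have hint2 : IntervalIntegrable (fun t => |f' t - f' x|) MeasureTheory.volume y x :=
      (((hcf'.mono hsub).sub continuousOn_const).abs.intervalIntegrable).symm
    have hint3 : IntervalIntegrable (fun t => M * (x - t)) MeasureTheory.volume y x :=
      (Continuous.intervalIntegrable (by continuity) y x)
    have hint4 : IntervalIntegrable (fun t => f' t - f' x) MeasureTheory.volume y x :=
      (hint.sub intervalIntegrable_const).symm
    have h1 : |∫ t in y..x, (f' t - f' x)| ≤ ∫ t in y..x, |f' t - f' x| :=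
      intervalIntegral.abs_integral_le_integral_abs hxy
    have h2 : (∫ t in y..x, |f' t - f' x|) ≤ ∫ t in y..x, M * (x - t) :=
      intervalIntegral.integral_mono_on hxy hint2 hint3 hb
    have h3 : (∫ t in y..x, M * (x - t)) = M * (y - x) ^ 2 / 2 := by
      rw [intervalIntegral.integral_const_mul]
      have : (∫ t in y..x, (x - t)) = (y - x) ^ 2 / 2 := by
        rw [intervalIntegral.integral_sub intervalIntegrable_const
          intervalIntegral.intervalIntegrable_id, integral_id, intervalIntegral.integral_const,
          smul_eq_mul]
        ring
      rw [this]; ring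
    rw [key, intervalIntegral.integral_symm, abs_neg]
    calc |∫ t in y..x, (f' t - f' x)| ≤ ∫ t in y..x, |f' t - f' x| := h1
      _ ≤ ∫ t in y..x, M * (x - t) := h2
      _ = M * (y - x) ^ 2 / 2 := h3

private lemma interp_aux {f f' f'' : ℝ → ℝ} {u v M : ℝ} (huv : u < v)
    (hf' : ∀ t ∈ Icc u v, HasDerivAt f (f' t) t)
    (hf'' : ∀ t ∈ Icc u v, HasDerivAt f' (f'' t) t)
    (hM : ∀ t ∈ Icc u v, |f'' t| ≤ M)
    {x : ℝ} (hx : x ∈ Icc u v) :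
    |f x - (f u + (f v - f u) / (v - u) * (x - u))| ≤ M * (v - u) ^ 2 / 8 := by
  have hM0 : 0 ≤ M := le_trans (abs_nonneg _) (hM u ⟨le_refl u, huv.le⟩)
  have hvu : (0:ℝ) < v - u := by linarith
  have hP := taylor_aux hf' hf'' hM hx (left_mem_Icc.2 huv.le)
  have hQ := taylor_aux hf' hf'' hM hx (right_mem_Icc.2 huv.le)
  have key : (f x - (f u + (f v - f u) / (v - u) * (x - u))) * (v - u)
      = -((v - x) * (f u - f x - f' x * (u - x)) + (x - u) * (f v - f x - f' x * (v - x))) := by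
    field_simp
    ring
  have habs : |f x - (f u + (f v - f u) / (v - u) * (x - u))| * (v - u)
      ≤ (v - x) * |f u - f x - f' x * (u - x)| + (x - u) * |f v - f x - f' x * (v - x)| := by
    have e0 : |f x - (f u + (f v - f u) / (v - u) * (x - u))| * (v - u)
        = |(f x - (f u + (f v - f u) / (v - u) * (x - u))) * (v - u)| := by
      rw [abs_mul, abs_of_pos hvu]
    rw [e0, key, abs_neg]
    calc |(v - x) * (f u - f x - f' x * (u - x)) + (x - u) * (f v - f x - f' x * (v - x))|
        ≤ |(v - x) * (f u - f x - f' x * (u - x))| + |(x - u) * (f v - f x - f' x * (v - x))| :=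
          abs_add_le _ _
      _ = (v - x) * |f u - f x - f' x * (u - x)| + (x - u) * |f v - f x - f' x * (v - x)| := by
          have e1 : |v - x| = v - x := abs_of_nonneg (by linarith [hx.2])
          have e2 : |x - u| = x - u := abs_of_nonneg (by linarith [hx.1])
          rw [abs_mul, abs_mul, e1, e2]
  have h2 : |f x - (f u + (f v - f u) / (v - u) * (x - u))| * (v - u)
      ≤ M * (v - u) ^ 2 / 8 * (v - u) := by
    have e1 : 0 ≤ v - x := by linarith [hx.2]
    have e2 : 0 ≤ x - u := by linarith [hx.1]
    calc |f x - (f u + (f v - f u) / (v - u) * (x - u))| * (v - u)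
        ≤ (v - x) * |f u - f x - f' x * (u - x)| + (x - u) * |f v - f x - f' x * (v - x)| := habs
      _ ≤ (v - x) * (M * (u - x) ^ 2 / 2) + (x - u) * (M * (v - x) ^ 2 / 2) := by
          gcongr
      _ ≤ M * (v - u) ^ 2 / 8 * (v - u) := by nlinarith [mul_nonneg (mul_nonneg hM0 hvu.le) (sq_nonneg ((x - u) - (v - x)))]
  exact le_of_mul_le_mul_right (by linarith) hvu


private lemma fg_eq {S : ℕ → ℕ} (hS : ∀ i, S i < S (i+1)) {N j k : ℕ} (hjN : j ≤ N)
    (h1 : S j ≤ k) (h2 : j < N → k < S (j+1)) :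
    Nat.findGreatest (fun j' => S j' ≤ k) N = j := by
  have hmono : Monotone S := (strictMono_nat_of_lt_succ hS).monotone
  apply Nat.findGreatest_eq_iff.2
  refine ⟨hjN, fun _ => h1, fun j' hlt hle hP => ?_⟩
  have hjN' : j < N := lt_of_lt_of_le hlt hle
  have h3 : S (j+1) ≤ S j' := hmono hlt
  have := h2 hjN'
  omega

private lemma fg_mem {S : ℕ → ℕ} (hS : ∀ i, S i < S (i+1)) (hS0 : S 0 = 0) {N k : ℕ}
    (hk : k < S N) :
    Nat.findGreatest (fun j' => S j' ≤ k) N < N ∧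
    S (Nat.findGreatest (fun j' => S j' ≤ k) N) ≤ k ∧
    k < S (Nat.findGreatest (fun j' => S j' ≤ k) N + 1) := by
  set j := Nat.findGreatest (fun j' => S j' ≤ k) N with hj
  have hP : S j ≤ k := by
    rcases Nat.eq_zero_or_pos j with h | h
    · rw [h, hS0]; exact Nat.zero_le k
    · exact Nat.findGreatest_of_ne_zero (P := fun j' => S j' ≤ k) (n := N) hj.symm (Nat.pos_iff_ne_zero.mp h)
  have hjN : j ≤ N := by rw [hj]; exact Nat.findGreatest_le N
  have hjltN : j < N := by
    rcases lt_or_eq_of_le hjN with h | h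
    · exact h
    · exfalso; rw [h] at hP; omega
  refine ⟨hjltN, hP, ?_⟩
  by_contra h
  push_neg at h
  have h1 : Nat.findGreatest (fun j' => S j' ≤ k) N < j + 1 := by
    rw [← hj]; exact lt_add_one j
  exact Nat.findGreatest_is_greatest h1 (by omega) h


set_option maxHeartbeats 2000000

/-- For `ε` small enough, a `C²` function on `[a,b]` can be approximated within `ε`
in sup norm by a continuous piecewise affine function with at most
`(1+μ)·(∫_a^b √|f''|)/√(2ε)` pieces. -/
theorem stmt10 (a b : ℝ) (hab : a < b) (f f' f'' : ℝ → ℝ)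
    (hf' : ∀ t ∈ Icc a b, HasDerivAt f (f' t) t)
    (hf'' : ∀ t ∈ Icc a b, HasDerivAt f' (f'' t) t)
    (hcont : ContinuousOn f'' (Icc a b))
    (hpos : 0 < ∫ t in a..b, Real.sqrt |f'' t|)
    (μ : ℝ) (hμ : 0 < μ) :
    ∃ ε₀ : ℝ, 0 < ε₀ ∧ ∀ ε : ℝ, 0 < ε → ε ≤ ε₀ →
      ∃ (m : ℕ) (x : ℕ → ℝ) (g : ℝ → ℝ),
        (m : ℝ) ≤ (1 + μ) * (∫ t in a..b, Real.sqrt |f'' t|) / Real.sqrt (2 * ε) ∧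
        x 0 = a ∧ x m = b ∧ (∀ k < m, x k ≤ x (k + 1)) ∧
        ContinuousOn g (Icc a b) ∧
        (∀ k < m, ∃ A B : ℝ, ∀ t ∈ Icc (x k) (x (k + 1)), g t = A * t + B) ∧
        ∀ t ∈ Icc a b, |f t - g t| ≤ ε := by
  classical
  have hba : 0 < b - a := sub_pos.2 hab
  set I := ∫ t in a..b, Real.sqrt |f'' t| with hIdef
  set φ : ℝ → ℝ := fun t => Real.sqrt |f'' t| with hφdef
  have hφcont : ContinuousOn φ (Icc a b) :=
    Real.continuous_sqrt.comp_continuousOn hcont.abs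
  have hφ0 : ∀ t, 0 ≤ φ t := fun t => Real.sqrt_nonneg _
  have hφsq : ∀ t, (φ t) ^ 2 = |f'' t| := fun t => Real.sq_sqrt (abs_nonneg _)
  set η := I / (2 * (b - a)) with hηdef
  have hη0 : 0 < η := div_pos hpos (by linarith)
  obtain ⟨δ, hδ0, hδ⟩ : ∃ δ, 0 < δ ∧ ∀ s ∈ Icc a b, ∀ t ∈ Icc a b,
      |s - t| < δ → |φ s - φ t| < η := by
    have h := (isCompact_Icc : IsCompact (Icc a b)).uniformContinuousOn_of_continuous hφcont
    rw [Metric.uniformContinuousOn_iff] at h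
    obtain ⟨δ, hδ0, H⟩ := h η hη0
    refine ⟨δ, hδ0, fun s hs t ht hst => ?_⟩
    have := H s hs t ht (by simpa [Real.dist_eq] using hst)
    simpa [Real.dist_eq] using this
  set N : ℕ := ⌊(b - a) / δ⌋₊ + 1 with hNdef
  have hN0 : 0 < N := Nat.succ_pos _
  have hNR : (0:ℝ) < N := by exact_mod_cast hN0
  set ℓ := (b - a) / N with hℓdef
  have hℓ0 : 0 < ℓ := div_pos hba hNR
  have hNℓ : (N:ℝ) * ℓ = b - a := by rw [hℓdef]; field_simp
  have hℓδ : ℓ < δ := by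
    rw [hℓdef, div_lt_iff₀ hNR]
    have h1 : (b - a) / δ < N := by
      rw [hNdef]; push_cast; exact Nat.lt_floor_add_one _
    calc b - a = (b - a) / δ * δ := by field_simp
      _ < N * δ := mul_lt_mul_of_pos_right h1 hδ0
      _ = δ * N := mul_comm _ _
  set p : ℕ → ℝ := fun j => a + j * ℓ with hpdef
  have hpstep : ∀ j : ℕ, p (j+1) = p j + ℓ := by
    intro j; simp only [hpdef]; push_cast; ring
  have hpa : p 0 = a := by simp [hpdef]
  have hpb : p N = b := by simp only [hpdef]; linarith [hNℓ]
  have hpmono : ∀ i j : ℕ, i ≤ j → p i ≤ p j := by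
    intro i j hij; simp only [hpdef]
    have h1 : (i:ℝ) ≤ j := by exact_mod_cast hij
    nlinarith
  have hpmem : ∀ j, j ≤ N → p j ∈ Icc a b := by
    intro j hj
    constructor
    · rw [← hpa]; exact hpmono 0 j (Nat.zero_le _)
    · rw [← hpb]; exact hpmono j N hj
  set M : ℕ → ℝ := fun j => φ (p j) + η with hMdef
  have hM0 : ∀ j, 0 < M j := fun j => add_pos_of_nonneg_of_pos (hφ0 _) hη0
  have hcellsub : ∀ j, j < N → Icc (p j) (p (j+1)) ⊆ Icc a b := by
    intro j hj t ht
    exact ⟨(hpmem j hj.le).1.trans ht.1, ht.2.trans (hpmem (j+1) hj).2⟩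
  have hclose : ∀ j, j < N → ∀ t ∈ Icc (p j) (p (j+1)), |φ (p j) - φ t| < η := by
    intro j hj t ht
    have h1 : t ∈ Icc a b := hcellsub j hj ht
    have h2 : |p j - t| < δ := by
      rw [abs_sub_comm]
      rw [abs_of_nonneg (by linarith [ht.1])]
      have h3 := ht.2
      rw [hpstep j] at h3
      linarith
    exact hδ (p j) (hpmem j hj.le) t h1 h2
  have hMb : ∀ j, j < N → ∀ t ∈ Icc (p j) (p (j+1)), φ t ≤ M j := by
    intro j hj t ht
    have := abs_lt.1 (hclose j hj t ht)
    simp only [hMdef]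
    linarith [this.1]
  have hMb2 : ∀ j, j < N → ∀ t ∈ Icc (p j) (p (j+1)), φ (p j) ≤ φ t + η := by
    intro j hj t ht
    have := abs_lt.1 (hclose j hj t ht)
    linarith [this.2]
  have hintφ : ∀ j, j < N → IntervalIntegrable φ MeasureTheory.volume (p j) (p (j+1)) := by
    intro j hj
    apply ContinuousOn.intervalIntegrable
    apply hφcont.mono
    rw [uIcc_of_le (by rw [hpstep j]; linarith : p j ≤ p (j+1))]
    exact hcellsub j hj
  have hsumI : (∑ j ∈ Finset.range N, ∫ t in (p j)..(p (j+1)), φ t) = I := by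
    rw [intervalIntegral.sum_integral_adjacent_intervals hintφ, hpa, hpb]
  have hcell : ∀ j, j < N → ℓ * M j ≤ (∫ t in (p j)..(p (j+1)), φ t) + 2 * η * ℓ := by
    intro j hj
    have hple : p j ≤ p (j+1) := by rw [hpstep j]; linarith
    have h2 : (∫ _t in (p j)..(p (j+1)), φ (p j)) ≤ ∫ t in (p j)..(p (j+1)), (φ t + η) := by
      apply intervalIntegral.integral_mono_on hple intervalIntegrable_const
        ((hintφ j hj).add intervalIntegrable_const)
      exact hMb2 j hj
    rw [intervalIntegral.integral_const, smul_eq_mul,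
      intervalIntegral.integral_add (hintφ j hj) intervalIntegrable_const,
      intervalIntegral.integral_const, smul_eq_mul] at h2
    have h3 : p (j+1) - p j = ℓ := by rw [hpstep j]; ring
    rw [h3] at h2
    simp only [hMdef]
    nlinarith [h2]
  have hRiemann : (∑ j ∈ Finset.range N, ℓ * M j) ≤ 2 * I := by
    have h1 := Finset.sum_le_sum (fun j hj => hcell j (Finset.mem_range.1 hj))
    rw [Finset.sum_add_distrib, hsumI, Finset.sum_const, Finset.card_range,
      nsmul_eq_mul] at h1
    have h2 : (N:ℝ) * (2 * η * ℓ) = I := by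
      rw [hηdef]
      field_simp
      nlinarith [hNℓ]
    linarith
  have hε₀0 : (0:ℝ) < (μ * I / N) ^ 2 / 2 := by
    have h1 : 0 < μ * I / N := div_pos (mul_pos hμ hpos) hNR
    positivity
  refine ⟨(μ * I / N) ^ 2 / 2, hε₀0, ?_⟩
  intro ε hε hεle
  set c := Real.sqrt (2 * ε) with hcdef
  have hc0 : 0 < c := Real.sqrt_pos.2 (by linarith)
  have hcsq : c ^ 2 = 2 * ε := Real.sq_sqrt (by linarith)
  have hcμ : (N:ℝ) * c ≤ μ * I := by
    have h1 : c ≤ μ * I / N := by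
      rw [hcdef]
      have h2 : Real.sqrt (2*ε) ≤ Real.sqrt ((μ * I / N) ^ 2) :=
        Real.sqrt_le_sqrt (by linarith)
      rwa [Real.sqrt_sq (le_of_lt (div_pos (mul_pos hμ hpos) hNR))] at h2
    rw [mul_comm]
    exact (le_div_iff₀ hNR).1 h1
  obtain ⟨n, hndef⟩ : ∃ n : ℕ → ℕ, n = fun j => ⌈ℓ * M j / (2 * c)⌉₊ := ⟨_, rfl⟩
  have hn0 : ∀ j, 0 < n j := by
    intro j
    have h1 : (0:ℝ) < ℓ * M j / (2 * c) :=
      div_pos (mul_pos hℓ0 (hM0 j)) (by linarith)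
    simp only [hndef]
    exact Nat.ceil_pos.2 h1
  have hnR : ∀ j, (0:ℝ) < n j := fun j => by exact_mod_cast hn0 j
  obtain ⟨s, hsdef⟩ : ∃ s : ℕ → ℝ, s = fun j => ℓ / n j := ⟨_, rfl⟩
  have hs0 : ∀ j, 0 < s j := by
    intro j; rw [hsdef]; exact div_pos hℓ0 (hnR j)
  have hns : ∀ j, (n j : ℝ) * s j = ℓ := by
    intro j
    have hne : (n j : ℝ) ≠ 0 := (hnR j).ne'
    rw [hsdef]
    field_simp
  have hsb : ∀ j, M j * s j ≤ 2 * c := by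
    intro j
    have h1 : ℓ * M j / (2 * c) ≤ (n j : ℝ) := by
      rw [hndef]; exact Nat.le_ceil _
    rw [div_le_iff₀ (by linarith)] at h1
    have h2 : M j * s j = M j * ℓ / (n j : ℝ) := by
      simp only [hsdef]; ring
    rw [h2, div_le_iff₀ (hnR j)]
    calc M j * ℓ = ℓ * M j := mul_comm _ _
      _ ≤ (n j:ℝ) * (2 * c) := h1
      _ = 2 * c * (n j:ℝ) := mul_comm _ _
  obtain ⟨S, hSdef⟩ : ∃ S : ℕ → ℕ, S = fun j => ∑ i ∈ Finset.range j, n i := ⟨_, rfl⟩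
  have hS0 : S 0 = 0 := by simp [hSdef]
  have hSsucc : ∀ j, S (j+1) = S j + n j := by
    intro j; rw [hSdef]; exact Finset.sum_range_succ _ _
  have hSstep : ∀ i, S i < S (i+1) := by
    intro i; have := hSsucc i; have := hn0 i; omega
  have hSmono : ∀ i j : ℕ, i ≤ j → S i ≤ S j :=
    fun i j hij => (strictMono_nat_of_lt_succ hSstep).monotone hij
  obtain ⟨m, hmdef⟩ : ∃ m : ℕ, m = S N := ⟨_, rfl⟩
  have hm1 : 1 ≤ m := by
    have h1 := hSmono 1 N hN0
    have h2 := hSstep 0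
    have h3 := hS0
    norm_num at h2
    omega
  -- count bound
  have hcount : (m:ℝ) ≤ (1 + μ) * I / c := by
    have h1 : (m:ℝ) = ∑ j ∈ Finset.range N, (n j : ℝ) := by
      rw [hmdef, hSdef]; push_cast; rfl
    have h2 : ∀ j ∈ Finset.range N, (n j:ℝ) ≤ ℓ * M j / (2*c) + 1 := by
      intro j _
      simp only [hndef]
      exact le_of_lt (Nat.ceil_lt_add_one
        (div_nonneg (mul_nonneg hℓ0.le (hM0 j).le) (by linarith)))
    calc (m:ℝ) = ∑ j ∈ Finset.range N, (n j:ℝ) := h1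
      _ ≤ ∑ j ∈ Finset.range N, (ℓ * M j / (2*c) + 1) := Finset.sum_le_sum h2
      _ = (∑ j ∈ Finset.range N, ℓ * M j) / (2*c) + N := by
          rw [Finset.sum_add_distrib, ← Finset.sum_div, Finset.sum_const,
            Finset.card_range, nsmul_eq_mul, mul_one]
      _ ≤ 2 * I / (2*c) + N := by
          have h3 : (∑ j ∈ Finset.range N, ℓ * M j) / (2*c) ≤ 2 * I / (2*c) :=
            (div_le_div_iff_of_pos_right (by linarith)).2 hRiemann
          linarith
      _ = I / c + N := by
          rw [mul_div_mul_left I c (two_ne_zero)]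
      _ ≤ I / c + μ * I / c := by
          have h4 : (N:ℝ) ≤ μ * I / c := by rw [le_div_iff₀ hc0]; exact hcμ
          linarith
      _ = (1 + μ) * I / c := by ring
    -- the partition points
  obtain ⟨C, hCdef⟩ : ∃ C : ℕ → ℕ,
      C = fun k => Nat.findGreatest (fun j => S j ≤ k) N := ⟨_, rfl⟩
  obtain ⟨x, hxdef⟩ : ∃ x : ℕ → ℝ,
      x = fun k => p (C k) + ((k - S (C k) : ℕ) : ℝ) * s (C k) := ⟨_, rfl⟩
  have hxval : ∀ j, j < N → ∀ d, d ≤ n j → x (S j + d) = p j + (d:ℝ) * s j := by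
    intro j hj d hd
    rcases Nat.lt_or_ge d (n j) with hdlt | hdge
    · have hC : C (S j + d) = j := by
        rw [hCdef]
        exact fg_eq hSstep hj.le (Nat.le_add_right _ _)
          (fun _ => by have := hSsucc j; omega)
      rw [hxdef]
      simp only [hC]
      have he : S j + d - S j = d := by omega
      rw [he]
    · have hde : d = n j := le_antisymm hd hdge
      have hk : S j + d = S (j+1) := by rw [hde, hSsucc]
      have hC : C (S j + d) = j + 1 := by
        rw [hCdef]
        exact fg_eq hSstep hj hk.ge
          (fun h => by
            have h1 := hSsucc (j+1)
            have h2 := hn0 (j+1)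
            omega)
      rw [hxdef]
      simp only [hC]
      have he : S j + d - S (j+1) = 0 := by
        have := hSsucc j; omega
      rw [he, Nat.cast_zero, zero_mul, add_zero, hpstep j, hde, hns j]
  have hx0 : x 0 = a := by
    have h1 := hxval 0 hN0 0 (Nat.zero_le _)
    have h2 : S 0 + 0 = 0 := by omega
    rw [h2] at h1
    simpa [hpa] using h1
  have hxm : x m = b := by
    have hCm : C m = N := by
      rw [hCdef]
      exact fg_eq hSstep le_rfl hmdef.ge (fun h => absurd h (lt_irrefl N))
    rw [hxdef]
    simp only [hCm]
    have h1 : m - S N = 0 := by omega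
    rw [h1, Nat.cast_zero, zero_mul, add_zero, hpb]
  have hstep : ∀ k, k < m → ∃ j, j < N ∧ x (k+1) = x k + s j ∧
      p j ≤ x k ∧ x (k+1) ≤ p (j+1) := by
    intro k hk
    have hdec := fg_mem hSstep hS0 (N := N) (k := k) (by omega)
    rw [show Nat.findGreatest (fun j' => S j' ≤ k) N = C k from by rw [hCdef]] at hdec
    obtain ⟨hjN, hSle, hlt⟩ := hdec
    have hd : k - S (C k) < n (C k) := by have := hSsucc (C k); omega
    have hk1 : x k = p (C k) + ((k - S (C k) : ℕ):ℝ) * s (C k) := by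
      have h1 := hxval (C k) hjN (k - S (C k)) hd.le
      rw [Nat.add_sub_cancel' hSle] at h1
      exact h1
    have hk2 : x (k+1) = p (C k) + (((k - S (C k) : ℕ):ℝ) + 1) * s (C k) := by
      have h1 : (k - S (C k)) + 1 ≤ n (C k) := hd
      have h2 := hxval (C k) hjN (k - S (C k) + 1) h1
      have h3 : S (C k) + (k - S (C k) + 1) = k + 1 := by omega
      rw [h3] at h2
      rw [h2]; push_cast; ring
    refine ⟨C k, hjN, ?_, ?_, ?_⟩
    · rw [hk1, hk2]; ring
    · rw [hk1]
      have h4 : (0:ℝ) ≤ ((k - S (C k) : ℕ):ℝ) := Nat.cast_nonneg _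
      have h5 := mul_nonneg h4 (hs0 (C k)).le
      linarith
    · have h3 : ((k - S (C k):ℕ):ℝ) + 1 ≤ (n (C k):ℝ) := by exact_mod_cast hd
      have h4 := hs0 (C k)
      rw [hk2, hpstep (C k), ← hns (C k)]
      have h5 := mul_le_mul_of_nonneg_right h3 h4.le
      linarith
  have hmonostep : ∀ k, k < m → x k < x (k+1) := by
    intro k hk
    obtain ⟨j, _, hxs, _, _⟩ := hstep k hk
    rw [hxs]
    linarith [hs0 j]
  have hmono' : ∀ k1 k2 : ℕ, k1 ≤ k2 → k2 ≤ m → x k1 ≤ x k2 := by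
    intro k1 k2 h12 h2m
    induction k2 with
    | zero => rw [Nat.le_zero.1 h12]
    | succ k ih =>
      rcases Nat.lt_or_ge k1 (k+1) with h | h
      · have h3 : x k1 ≤ x k := ih (by omega) (by omega)
        have h4 : x k < x (k+1) := hmonostep k (by omega)
        linarith
      · have : k1 = k + 1 := by omega
        rw [this]
  -- the interpolant
  obtain ⟨K, hKdef⟩ : ∃ K : ℝ → ℕ,
      K = fun t => Nat.findGreatest (fun k => x k ≤ t) (m-1) := ⟨_, rfl⟩
  have hKle : ∀ t, K t ≤ m - 1 := by
    intro t; rw [hKdef]; exact Nat.findGreatest_le _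
  have hKlt : ∀ t, K t < m := fun t => by have := hKle t; omega
  have hKlow : ∀ t, a ≤ t → x (K t) ≤ t := by
    intro t ht
    rcases Nat.eq_zero_or_pos (K t) with h | h
    · rw [h, hx0]; exact ht
    · exact Nat.findGreatest_of_ne_zero (P := fun k => x k ≤ t) (n := m-1)
        (by rw [hKdef]) (Nat.pos_iff_ne_zero.1 h)
  have hKhigh : ∀ t, t ≤ b → t ≤ x (K t + 1) := by
    intro t ht
    rcases Nat.lt_or_ge (K t + 1) m with h | h
    · by_contra hcon
      push_neg at hcon
      have h1 : Nat.findGreatest (fun k => x k ≤ t) (m-1) < K t + 1 := by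
        rw [show Nat.findGreatest (fun k => x k ≤ t) (m-1) = K t from by rw [hKdef]]
        omega
      exact Nat.findGreatest_is_greatest h1 (by omega) hcon.le
    · have h1 : K t + 1 = m := by have := hKle t; omega
      rw [h1, hxm]; exact ht
  have hKeq : ∀ k, k < m → ∀ t, x k ≤ t → t < x (k+1) → K t = k := by
    intro k hk t h1 h2
    have hle : k ≤ K t := by
      have h3 := Nat.le_findGreatest (P := fun k' => x k' ≤ t) (m := k) (n := m-1)
        (by omega) h1
      rwa [show Nat.findGreatest (fun k' => x k' ≤ t) (m-1) = K t from by rw [hKdef]] at h3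
    have hge : K t ≤ k := by
      by_contra h
      push_neg at h
      have hPK : x (K t) ≤ t :=
        Nat.findGreatest_of_ne_zero (P := fun k' => x k' ≤ t) (n := m-1)
          (by rw [hKdef]) (by omega)
      have h4 : x (k+1) ≤ x (K t) := hmono' (k+1) (K t) (by omega) (by have := hKle t; omega)
      linarith
    omega
  obtain ⟨g, hgdef⟩ : ∃ g : ℝ → ℝ, g = fun t => f (x (K t)) +
      (f (x (K t + 1)) - f (x (K t))) / (x (K t + 1) - x (K t)) * (t - x (K t)) := ⟨_, rfl⟩
  have hgnode : ∀ k, k ≤ m → g (x k) = f (x k) := by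
    intro k hk
    rcases Nat.lt_or_ge k m with h | h
    · have hK : K (x k) = k := hKeq k h (x k) le_rfl (hmonostep k h)
      rw [hgdef]
      simp only [hK, sub_self, mul_zero, add_zero]
    · have hkm : k = m := le_antisymm hk h
      subst hkm
      have hK : K (x k) = k - 1 := by
        have h1 := hKle (x k)
        have h2 : k - 1 ≤ K (x k) := by
          have h3 := Nat.le_findGreatest (P := fun k' => x k' ≤ x k) (m := k-1) (n := k-1)
            le_rfl (hmono' (k-1) k (by omega) le_rfl)
          rwa [show Nat.findGreatest (fun k' => x k' ≤ x k) (k-1) = K (x k) from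
            by rw [hKdef]] at h3
        omega
      rw [hgdef]
      simp only [hK]
      have hm' : k - 1 + 1 = k := by omega
      rw [hm']
      have hne : x k - x (k-1) ≠ 0 := by
        have h5 := hmonostep (k-1) (by omega)
        rw [hm'] at h5
        exact sub_ne_zero.2 h5.ne'
      rw [div_mul_cancel₀ _ hne]
      ring
  have haffine : ∀ k, k < m → ∀ t ∈ Icc (x k) (x (k+1)),
      g t = ((f (x (k+1)) - f (x k)) / (x (k+1) - x k)) * t +
        (f (x k) - ((f (x (k+1)) - f (x k)) / (x (k+1) - x k)) * x k) := by
    intro k hk t ht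
    rcases lt_or_eq_of_le ht.2 with h | h
    · have hK : K t = k := hKeq k hk t ht.1 h
      rw [hgdef]
      simp only [hK]
      ring
    · rw [h, hgnode (k+1) (by omega)]
      have hne : x (k+1) - x k ≠ 0 := sub_ne_zero.2 (hmonostep k hk).ne'
      have hform : ((f (x (k+1)) - f (x k)) / (x (k+1) - x k)) * x (k+1) +
          (f (x k) - ((f (x (k+1)) - f (x k)) / (x (k+1) - x k)) * x k)
          = ((f (x (k+1)) - f (x k)) / (x (k+1) - x k)) * (x (k+1) - x k) + f (x k) := by
        ring
      rw [hform, div_mul_cancel₀ _ hne]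
      ring
  have hgcont : ContinuousOn g (Icc a b) := by
    have key : ∀ k, k ≤ m → ContinuousOn g (Icc a (x k)) := by
      intro k
      induction k with
      | zero => intro _; rw [hx0, Set.Icc_self]; exact continuousOn_singleton g a
      | succ k ih =>
        intro hk1
        have hk : k < m := by omega
        have h1 := ih hk.le
        have h2 : ContinuousOn g (Icc (x k) (x (k+1))) := by
          have hca : ContinuousOn (fun t => ((f (x (k+1)) - f (x k)) / (x (k+1) - x k)) * t +
              (f (x k) - ((f (x (k+1)) - f (x k)) / (x (k+1) - x k)) * x k))
              (Icc (x k) (x (k+1))) :=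
            ((continuous_const.mul continuous_id).add continuous_const).continuousOn
          exact hca.congr (fun t ht => haffine k hk t ht)
        have h3 := union_closed_cont isClosed_Icc isClosed_Icc h1 h2
        rwa [Set.Icc_union_Icc_eq_Icc
          (by rw [← hx0]; exact hmono' 0 k (Nat.zero_le _) hk.le)
          (hmonostep k hk).le] at h3
    have h4 := key m le_rfl
    rwa [hxm] at h4
  have herr : ∀ t ∈ Icc a b, |f t - g t| ≤ ε := by
    intro t ht
    have hKm : K t < m := hKlt t
    obtain ⟨j, hjN, hxs, hlow, hhigh⟩ := hstep (K t) hKm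
    have hu : x (K t) ≤ t := hKlow t ht.1
    have hv : t ≤ x (K t + 1) := hKhigh t ht.2
    have hsubcell : Icc (x (K t)) (x (K t + 1)) ⊆ Icc a b := by
      intro z hz
      exact hcellsub j hjN ⟨hlow.trans hz.1, hz.2.trans hhigh⟩
    have huv : x (K t) < x (K t + 1) := hmonostep _ hKm
    have hMbound : ∀ z ∈ Icc (x (K t)) (x (K t + 1)), |f'' z| ≤ (M j)^2 := by
      intro z hz
      have hz' : z ∈ Icc (p j) (p (j+1)) := ⟨hlow.trans hz.1, hz.2.trans hhigh⟩
      have h1 := hMb j hjN z hz'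
      calc |f'' z| = (φ z)^2 := (hφsq z).symm
        _ ≤ (M j)^2 := pow_le_pow_left₀ (hφ0 z) h1 2
    have hint := interp_aux huv (fun z hz => hf' z (hsubcell hz))
      (fun z hz => hf'' z (hsubcell hz)) hMbound ⟨hu, hv⟩
    have hgt : g t = f (x (K t)) +
        (f (x (K t + 1)) - f (x (K t))) / (x (K t + 1) - x (K t)) * (t - x (K t)) := by
      rw [hgdef]
    rw [hgt]
    refine le_trans hint ?_
    have hlen : x (K t + 1) - x (K t) = s j := by rw [hxs]; ring
    rw [hlen]
    have h1 : M j * s j ≤ 2 * c := hsb j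
    have h2 : (M j * s j)^2 ≤ (2*c)^2 :=
      pow_le_pow_left₀ (mul_nonneg (hM0 j).le (hs0 j).le) h1 2
    calc (M j)^2 * (s j)^2 / 8 = (M j * s j)^2 / 8 := by ring
      _ ≤ (2*c)^2 / 8 := (div_le_div_iff_of_pos_right (by norm_num : (0:ℝ) < 8)).2 h2
      _ = c^2 / 2 := by ring
      _ = ε := by rw [hcsq]; ring
  exact ⟨m, x, g, hcount, hx0, hxm, fun k hk => (hmonostep k hk).le, hgcont,
    fun k hk => ⟨_, _, haffine k hk⟩, herr⟩
end

section
/- For integers n ≥ 1 and d ≥ 1, the number of multi-indices (l, i) with l ∈ ℕ^d, l ≥ 1, |l|₁ ≤ n+d-1, 1 ≤ i ≤ 2^l - 1 componentwise, and all components of i odd, equals Σ_{i=0}^{n-1} 2^i · C(d-1+i, d-1). Moreover this quantity equals (-1)^d + 2^n · Σ_{i=0}^{d-1} C(n+d-1, i) · (-2)^{d-1-i}. -/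
section Aux
open Finset

lemma odd_card (m : ℕ) : ((Finset.range (2*m)).filter (fun i => Odd i)).card = m := by
  have : (Finset.range (2*m)).filter (fun i => Odd i) = (Finset.range m).image (fun t => 2*t+1) := by
    ext i
    simp only [mem_filter, mem_range, mem_image]
    constructor
    · rintro ⟨hi, t, ht⟩; exact ⟨t, by omega, by omega⟩
    · rintro ⟨t, ht, rfl⟩; exact ⟨by omega, t, by omega⟩
  rw [this, card_image_of_injective _ (fun a b h => by omega), card_range]

lemma tuple_sum_card (d s : ℕ) : ((Fintype.piFinset fun _ : Fin d => Finset.range (s+1)).filter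
    (fun m => ∑ j, m j = s)).card = Nat.multichoose d s := by
  have h1 : (↑((Fintype.piFinset fun _ : Fin d => Finset.range (s+1)).filter
      (fun m => ∑ j, m j = s)) : Set (Fin d → ℕ)) = {m : Fin d → ℕ | ∑ j, m j = s} := by
    ext m
    simp only [coe_filter, Set.mem_setOf_eq, Fintype.mem_piFinset, mem_range]
    constructor
    · rintro ⟨-, h⟩; exact h
    · intro h; refine ⟨fun j => ?_, h⟩
      have : m j ≤ ∑ i, m i := Finset.single_le_sum (fun i _ => Nat.zero_le _) (mem_univ j)
      omega
  have h2 := Set.ncard_coe_finset ((Fintype.piFinset fun _ : Fin d => Finset.range (s+1)).filter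
      (fun m => ∑ j, m j = s))
  rw [h1] at h2
  rw [← h2, ← Nat.card_coe_set_eq]
  have h3 : Nat.card {m : Fin d → ℕ // ∑ j, m j = s} = Nat.card (Sym (Fin d) s) :=
    Nat.card_congr (Sym.equivNatSumOfFintype (Fin d) s).symm
  rw [show (↥{m : Fin d → ℕ | ∑ j, m j = s}) = {m : Fin d → ℕ // ∑ j, m j = s} from rfl, h3,
    Nat.card_eq_fintype_card, Sym.card_sym_eq_multichoose, Fintype.card_fin]

lemma part1 (n d : ℕ) (hn : 1 ≤ n) (hd : 1 ≤ d) :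
    ({p : (Fin d → ℕ) × (Fin d → ℕ) |
        (∀ j, 1 ≤ p.1 j) ∧ (∑ j, p.1 j) ≤ n + d - 1 ∧
        ∀ j, 1 ≤ p.2 j ∧ p.2 j ≤ 2 ^ (p.1 j) - 1 ∧ Odd (p.2 j)}.ncard
      = ∑ i ∈ Finset.range n, 2 ^ i * (d - 1 + i).choose (d - 1)) := by
  set N := n + d - 1 with hN
  set L : Finset (Fin d → ℕ) :=
    (Fintype.piFinset fun _ : Fin d => Finset.Icc 1 N).filter (fun l => ∑ j, l j ≤ N) with hL
  set T : Finset ((Fin d → ℕ) × (Fin d → ℕ)) :=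
    L.biUnion (fun l => {l} ×ˢ Fintype.piFinset
      (fun j => (Finset.range (2 ^ l j)).filter (fun i => Odd i))) with hT
  -- step 1 : the set is ↑T
  have hset : {p : (Fin d → ℕ) × (Fin d → ℕ) |
        (∀ j, 1 ≤ p.1 j) ∧ (∑ j, p.1 j) ≤ N ∧
        ∀ j, 1 ≤ p.2 j ∧ p.2 j ≤ 2 ^ (p.1 j) - 1 ∧ Odd (p.2 j)} = ↑T := by
    ext ⟨l, i⟩
    simp only [Set.mem_setOf_eq, hT, coe_biUnion, Set.mem_iUnion, mem_coe, hL, mem_filter,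
      Fintype.mem_piFinset, mem_Icc, Finset.mem_product, Finset.mem_singleton, mem_range]
    constructor
    · rintro ⟨h1, h2, h3⟩
      refine ⟨l, ⟨⟨fun j => ⟨h1 j, ?_⟩, h2⟩, rfl, fun j => ⟨?_, (h3 j).2.2⟩⟩⟩
      · exact le_trans (Finset.single_le_sum (fun i _ => Nat.zero_le _) (mem_univ j)) h2
      · have := (h3 j).2.1
        have h2p : 1 ≤ 2 ^ (l j) := Nat.one_le_two_pow
        omega
    · rintro ⟨l', ⟨⟨hl1, hl2⟩, rfl, hi⟩⟩
      refine ⟨fun j => (hl1 j).1, hl2, fun j => ?_⟩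
      obtain ⟨hir, hio⟩ := hi j
      obtain ⟨t, ht⟩ := hio
      exact ⟨by omega, by omega, ⟨t, ht⟩⟩
  rw [hset, Set.ncard_coe_finset]
  -- step 2 : card of T
  have hcard : T.card = ∑ l ∈ L, 2 ^ (∑ j, (l j - 1)) := by
    rw [hT, card_biUnion]
    · refine sum_congr rfl fun l hl => ?_
      rw [card_product, card_singleton, one_mul, Fintype.card_piFinset]
      have hl1 : ∀ j, 1 ≤ l j := by
        intro j
        have h := (mem_filter.mp hl).1
        rw [Fintype.mem_piFinset] at h
        exact (mem_Icc.mp (h j)).1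
      have : ∀ j : Fin d, ((Finset.range (2 ^ l j)).filter (fun i => Odd i)).card
          = 2 ^ (l j - 1) := by
        intro j
        have h2 : 2 ^ l j = 2 * 2 ^ (l j - 1) := by
          rw [← pow_succ']
          congr 1
          have := hl1 j
          omega
        rw [h2, odd_card]
      rw [Finset.prod_congr rfl (fun j _ => this j), Finset.prod_pow_eq_pow_sum]
    · intro a ha b hb hab
      simp only [Finset.disjoint_left]
      rintro ⟨x, y⟩ hx hy
      simp only [Finset.mem_product, Finset.mem_singleton] at hx hy
      exact hab (hx.1 ▸ hy.1 ▸ rfl)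
  rw [hcard]
  clear hcard hset
  -- step 3 : reindex l = m + 1
  set M : Finset (Fin d → ℕ) :=
    (Fintype.piFinset fun _ : Fin d => Finset.range n).filter (fun m => ∑ j, m j ≤ n - 1) with hM
  have hre : ∑ l ∈ L, 2 ^ (∑ j, (l j - 1)) = ∑ m ∈ M, 2 ^ (∑ j, m j) := by
    refine Finset.sum_nbij' (i := fun l => fun j => l j - 1) (j := fun m => fun j => m j + 1)
      (hi := ?_) (hj := ?_) (left_neg := ?_) (right_neg := ?_) (h := ?_)
    · intro l hl
      simp only [hL, mem_filter, Fintype.mem_piFinset, mem_Icc] at hl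
      obtain ⟨hl1, hl2⟩ := hl
      have hsum : ∑ j, (l j - 1) + d = ∑ j, l j := by
        have c1 : ∑ j, l j = ∑ j, ((l j - 1) + 1) :=
          Finset.sum_congr rfl fun j _ => by have := (hl1 j).1; omega
        rw [c1, Finset.sum_add_distrib]
        simp
      simp only [hM, mem_filter, Fintype.mem_piFinset, mem_range]
      constructor
      · intro j
        have : l j - 1 ≤ ∑ j, (l j - 1) :=
          Finset.single_le_sum (f := fun j => l j - 1) (fun i _ => Nat.zero_le _) (mem_univ j)
        omega
      · omega
    · intro m hm
      simp only [hM, mem_filter, Fintype.mem_piFinset, mem_range] at hm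
      obtain ⟨hm1, hm2⟩ := hm
      have hsum : ∑ j, (m j + 1) = ∑ j, m j + d := by
        rw [Finset.sum_add_distrib]
        simp [Finset.card_univ]
      simp only [hL, mem_filter, Fintype.mem_piFinset, mem_Icc]
      constructor
      · intro j
        have : m j ≤ ∑ j, m j := Finset.single_le_sum (fun i _ => Nat.zero_le _) (mem_univ j)
        omega
      · omega
    · intro l hl
      simp only [hL, mem_filter, Fintype.mem_piFinset, mem_Icc] at hl
      funext j
      have := (hl.1 j).1
      simp only []
      omega
    · intro m hm
      funext j
      simp only []
      omega
    · intro l hl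
      rfl
  rw [hre]
  clear hre
  -- step 4 : fiberwise
  have hfib : ∑ m ∈ M, 2 ^ (∑ j, m j)
      = ∑ s ∈ range n, ∑ m ∈ M.filter (fun m => ∑ j, m j = s), 2 ^ (∑ j, m j) := by
    refine (Finset.sum_fiberwise_of_maps_to ?_ _).symm
    intro m hm
    simp only [hM, mem_filter] at hm
    simp only [mem_range]
    omega
  rw [hfib]
  clear hfib
  refine sum_congr rfl fun s hs => ?_
  have hs' := mem_range.mp hs
  have hch : (d + s - 1).choose s = (d - 1 + s).choose (d - 1) := by
    have h1 : d + s - 1 = d - 1 + s := by omega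
    have h2 := Nat.choose_symm (n := d - 1 + s) (k := s) (Nat.le_add_left s (d-1))
    have h3 : d - 1 + s - s = d - 1 := by omega
    rw [h1, ← h2, h3]
  have hfil : M.filter (fun m => ∑ j, m j = s)
      = (Fintype.piFinset fun _ : Fin d => Finset.range (s+1)).filter (fun m => ∑ j, m j = s) := by
    ext m
    simp only [hM, mem_filter, Fintype.mem_piFinset, mem_range]
    constructor
    · rintro ⟨⟨h1, h2⟩, h3⟩
      refine ⟨fun j => ?_, h3⟩
      have : m j ≤ ∑ j, m j := Finset.single_le_sum (fun i _ => Nat.zero_le _) (mem_univ j)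
      omega
    · rintro ⟨h1, h3⟩
      have : ∀ j, m j ≤ ∑ j, m j := fun j =>
        Finset.single_le_sum (fun i _ => Nat.zero_le _) (mem_univ j)
      exact ⟨⟨fun j => by have := this j; omega, by omega⟩, h3⟩
  have hconst : ∑ m ∈ M.filter (fun m => ∑ j, m j = s), 2 ^ (∑ j, m j)
      = (M.filter (fun m => ∑ j, m j = s)).card * 2 ^ s := by
    rw [Finset.sum_congr rfl (fun m hm => by rw [(mem_filter.mp hm).2]),
      Finset.sum_const, smul_eq_mul]
  rw [hconst, hfil, tuple_sum_card, Nat.multichoose_eq]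
  rw [hch, mul_comm]


lemma key (M e : ℕ) : 2 * ∑ i ∈ range (e+1), ((M+1).choose i : ℤ) * (-2)^(e-i)
    = ∑ i ∈ range (e+1), (M.choose i : ℤ) * (-2)^(e-i) + M.choose e := by
  set A : ℤ := ∑ i ∈ range e, (M.choose i : ℤ) * (-2)^(e-1-i) with hAdef
  have hA : ∑ i ∈ range (e+1), (M.choose i : ℤ) * (-2)^(e-i) = -2*A + M.choose e := by
    rw [sum_range_succ, Nat.sub_self, pow_zero, mul_one, hAdef, mul_sum]
    congr 1
    refine sum_congr rfl fun i hi => ?_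
    have : e - i = (e-1-i)+1 := by have := mem_range.mp hi; omega
    rw [this, pow_succ]; ring
  have hC : ∑ i ∈ range e, (M.choose (i+1) : ℤ) * (-2)^(e-1-i)
      = (-2*A + M.choose e) - (-2)^e := by
    rw [← hA, sum_range_succ']
    have : ∀ i ∈ range e, ((M.choose (i+1) : ℤ)) * (-2)^(e-(i+1))
        = (M.choose (i+1) : ℤ) * (-2)^(e-1-i) := by
      intro i hi
      have : e - (i+1) = e-1-i := by have := mem_range.mp hi; omega
      rw [this]
    rw [sum_congr rfl this]
    simp
  have hB : ∑ i ∈ range (e+1), ((M+1).choose i : ℤ) * (-2)^(e-i)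
      = A + (∑ i ∈ range e, (M.choose (i+1) : ℤ) * (-2)^(e-1-i)) + (-2)^e := by
    rw [sum_range_succ', ← sum_add_distrib]
    have : ∀ i ∈ range e, (((M+1).choose (i+1) : ℤ)) * (-2)^(e-(i+1))
        = (M.choose i : ℤ) * (-2)^(e-1-i) + (M.choose (i+1) : ℤ) * (-2)^(e-1-i) := by
      intro i hi
      have h1 : e - (i+1) = e-1-i := by have := mem_range.mp hi; omega
      rw [h1, Nat.choose_succ_succ]
      push_cast
      ring
    rw [sum_congr rfl this]
    simp
  rw [hA, hB, hC]
  ring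

lemma part2 (d : ℕ) (hd : 1 ≤ d) (n : ℕ) :
    (∑ i ∈ Finset.range n, 2 ^ i * (d - 1 + i).choose (d - 1) : ℤ)
      = (-1) ^ d + 2 ^ n * ∑ i ∈ Finset.range d,
          ((n + d - 1).choose i : ℤ) * (-2) ^ (d - 1 - i) := by
  obtain ⟨e, rfl⟩ : ∃ e, d = e + 1 := ⟨d-1, by omega⟩
  simp only [Nat.add_sub_cancel]
  induction n with
  | zero =>
    simp only [range_zero, sum_empty, pow_zero, one_mul, Nat.zero_add, Nat.add_sub_cancel]
    have h0 := add_pow (1 : ℤ) (-2) e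
    norm_num at h0
    have h2 : ∑ i ∈ range (e+1), ((e.choose i : ℤ)) * (-2)^(e-i)
        = ∑ i ∈ range (e+1), (-2)^(e-i) * (e.choose i : ℤ) :=
      sum_congr rfl fun i _ => mul_comm _ _
    rw [h2, ← h0, pow_succ]
    ring
  | succ n ih =>
    rw [sum_range_succ, ih]
    have hM : (n + 1) + (e + 1) - 1 = (n + (e+1) - 1) + 1 := by omega
    have hMe : n + (e+1) - 1 = e + n := by omega
    rw [hM, hMe] at *
    have hk := key (e + n) e
    have h3 : (2:ℤ)^(n+1) * ∑ i ∈ range (e+1), ((e+n+1).choose i : ℤ) * (-2)^(e-i)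
        = 2^n * (2 * ∑ i ∈ range (e+1), ((e+n+1).choose i : ℤ) * (-2)^(e-i)) := by ring
    rw [h3, hk]
    ring


end Aux

/-- The number of sparse-grid multi-indices `(l, i)` with `l ≥ 1`, `|l|₁ ≤ n+d-1`,
`1 ≤ i ≤ 2^l - 1` componentwise with all components of `i` odd, equals
`∑_{i=0}^{n-1} 2^i·C(d-1+i, d-1)`, which in turn equals
`(-1)^d + 2^n·∑_{i=0}^{d-1} C(n+d-1, i)·(-2)^{d-1-i}`. -/
theorem stmt11 (n d : ℕ) (hn : 1 ≤ n) (hd : 1 ≤ d) :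
    ({p : (Fin d → ℕ) × (Fin d → ℕ) |
        (∀ j, 1 ≤ p.1 j) ∧ (∑ j, p.1 j) ≤ n + d - 1 ∧
        ∀ j, 1 ≤ p.2 j ∧ p.2 j ≤ 2 ^ (p.1 j) - 1 ∧ Odd (p.2 j)}.ncard
      = ∑ i ∈ Finset.range n, 2 ^ i * (d - 1 + i).choose (d - 1)) ∧
    ((∑ i ∈ Finset.range n, 2 ^ i * (d - 1 + i).choose (d - 1) : ℤ)
      = (-1) ^ d + 2 ^ n * ∑ i ∈ Finset.range d,
          ((n + d - 1).choose i : ℤ) * (-2) ^ (d - 1 - i)) := by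
  exact ⟨part1 n d hn hd, part2 d hd n⟩
end

section
/- Let n_ε be defined, for a fixed constant C > 0 and dimension d ≥ 1, as the smallest positive integer n such that C·2^{-2n}·A(d,n) ≤ ε/2, where A(d,n) = Σ_{k=0}^{d-1} C(n+d-1, k). Then as ε → 0: n_ε ~ (1/(2 log 2))·log(1/ε), and 2^{n_ε} = O(ε^{-1/2}·(log(1/ε))^{(d-1)/2}). -/
open Set Filter Real

namespace Stmt18

noncomputable def A (d n : ℕ) : ℝ := ∑ k ∈ Finset.range d, ((n + d - 1).choose k : ℝ)

def S (d : ℕ) (C ε : ℝ) : Set ℕ :=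
  {n : ℕ | 1 ≤ n ∧ C * (2 : ℝ) ^ (-(2 * (n : ℤ))) * A d n ≤ ε / 2}

noncomputable def nE (d : ℕ) (C ε : ℝ) : ℕ := sInf (S d C ε)

lemma one_le_A (d : ℕ) (hd : 1 ≤ d) (n : ℕ) : (1 : ℝ) ≤ A d n := by
  have h0 : (0 : ℕ) ∈ Finset.range d := Finset.mem_range.2 hd
  calc (1 : ℝ) = ((n + d - 1).choose 0 : ℝ) := by simp
    _ ≤ A d n := Finset.single_le_sum (f := fun k => (((n + d - 1).choose k : ℕ) : ℝ))
        (fun k _ => by positivity) h0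

lemma A_le (d : ℕ) (hd : 1 ≤ d) (n : ℕ) (hn : 1 ≤ n) :
    A d n ≤ (d : ℝ) * ((n : ℝ) + d) ^ (d - 1) := by
  have key : ∀ k ∈ Finset.range d, ((n + d - 1).choose k : ℕ) ≤ (n + d) ^ (d - 1) := by
    intro k hk
    calc (n + d - 1).choose k ≤ (n + d - 1) ^ k := Nat.choose_le_pow _ _
      _ ≤ (n + d - 1) ^ (d - 1) := Nat.pow_le_pow_right (by omega) (by
          exact Nat.le_sub_one_of_lt (Finset.mem_range.1 hk))
      _ ≤ (n + d) ^ (d - 1) := Nat.pow_le_pow_left (by omega) _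
  have hnat : (∑ k ∈ Finset.range d, (n + d - 1).choose k) ≤ d * (n + d) ^ (d - 1) := by
    calc (∑ k ∈ Finset.range d, (n + d - 1).choose k)
        ≤ ∑ _k ∈ Finset.range d, (n + d) ^ (d - 1) := Finset.sum_le_sum key
      _ = d * (n + d) ^ (d - 1) := by simp [Finset.sum_const, mul_comm]
  have := Nat.cast_le (α := ℝ) |>.2 hnat
  push_cast at this
  unfold A
  push_cast
  convert this using 2

lemma cond_iff (d : ℕ) (C ε : ℝ) (n : ℕ) :
    C * (2 : ℝ) ^ (-(2 * (n : ℤ))) * A d n ≤ ε / 2 ↔ C * A d n ≤ ε / 2 * 4 ^ n := by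
  have h4 : (2 : ℝ) ^ (-(2 * (n : ℤ))) = ((4 : ℝ) ^ n)⁻¹ := by
    rw [zpow_neg]
    congr 1
    rw [show (2 * (n : ℤ)) = ((2 * n : ℕ) : ℤ) by push_cast; ring, zpow_natCast, pow_mul]
    norm_num
  rw [h4, show C * ((4 : ℝ) ^ n)⁻¹ * A d n = C * A d n / 4 ^ n by ring,
    div_le_iff₀ (by positivity)]

lemma S_nonempty (d : ℕ) (hd : 1 ≤ d) {C ε : ℝ} (hC : 0 < C) (hε : 0 < ε) :
    (S d C ε).Nonempty := by
  have h1 : Tendsto (fun m : ℕ => ((m : ℝ)) ^ (d - 1) / 4 ^ m) atTop (nhds 0) :=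
    tendsto_pow_const_div_const_pow_of_one_lt (d - 1) (by norm_num)
  have h2 : Tendsto (fun n : ℕ => (((n + d : ℕ) : ℝ)) ^ (d - 1) / 4 ^ (n + d)) atTop (nhds 0) :=
    h1.comp (tendsto_add_atTop_nat d)
  have h3 : Tendsto (fun n : ℕ => C * (d : ℝ) * 4 ^ d *
      ((((n + d : ℕ) : ℝ)) ^ (d - 1) / 4 ^ (n + d))) atTop (nhds 0) := by
    simpa using h2.const_mul (C * (d : ℝ) * 4 ^ d)
  have h4 : ∀ᶠ n : ℕ in atTop, C * (d : ℝ) * 4 ^ d *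
      ((((n + d : ℕ) : ℝ)) ^ (d - 1) / 4 ^ (n + d)) < ε / 2 := by
    have := h3.eventually (eventually_lt_nhds (show (0:ℝ) < ε / 2 by positivity))
    simpa using this
  obtain ⟨n, hn1, hn2⟩ := ((h4.and (eventually_ge_atTop 1)).exists)
  refine ⟨n, hn2, ?_⟩
  rw [cond_iff]
  have hA := A_le d hd n hn2
  have heq : C * (d : ℝ) * 4 ^ d * ((((n + d : ℕ) : ℝ)) ^ (d - 1) / 4 ^ (n + d))
      = C * ((d : ℝ) * ((n : ℝ) + d) ^ (d - 1)) / 4 ^ n := by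
    rw [pow_add]
    push_cast
    field_simp
  rw [heq] at hn1
  have h5 : C * A d n ≤ C * ((d : ℝ) * ((n : ℝ) + d) ^ (d - 1)) := by
    exact mul_le_mul_of_nonneg_left hA hC.le
  have h6 : C * ((d : ℝ) * ((n : ℝ) + d) ^ (d - 1)) ≤ ε / 2 * 4 ^ n := by
    rw [div_lt_iff₀ (by positivity)] at hn1
    linarith
  linarith

lemma nE_mem (d : ℕ) (hd : 1 ≤ d) {C ε : ℝ} (hC : 0 < C) (hε : 0 < ε) :
    1 ≤ nE d C ε ∧ C * A d (nE d C ε) ≤ ε / 2 * 4 ^ (nE d C ε) := by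
  have := Nat.sInf_mem (S_nonempty d hd hC hε)
  exact ⟨this.1, (cond_iff d C ε _).1 this.2⟩

lemma two_le_nE (d : ℕ) (hd : 1 ≤ d) {C ε : ℝ} (hC : 0 < C) (hε : 0 < ε)    (hε2 : ε < C / 2) : 2 ≤ nE d C ε := by
  have hA1 : (1:ℝ) ≤ A d 1 := one_le_A d hd 1
  obtain ⟨h1, h2⟩ := nE_mem d hd hC hε
  by_contra h
  have : nE d C ε = 1 := by omega
  rw [this] at h2
  have : C * 1 ≤ ε / 2 * 4 ^ 1 := le_trans (by nlinarith) h2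
  norm_num at this
  linarith

lemma nE_rev (d : ℕ) (hd : 1 ≤ d) {C ε : ℝ} (hC : 0 < C) (hε : 0 < ε)
    (h2 : 2 ≤ nE d C ε) :
    ε / 2 * 4 ^ (nE d C ε - 1) < C * A d (nE d C ε - 1) := by
  have hlt : nE d C ε - 1 < nE d C ε := by omega
  have hnm := Nat.notMem_of_lt_sInf (s := S d C ε) hlt
  by_contra h
  push_neg at h
  exact hnm ⟨by omega, (cond_iff d C ε _).2 h⟩


lemma one_le_nE (d : ℕ) (hd : 1 ≤ d) {C ε : ℝ} (hC : 0 < C) (hε : 0 < ε) :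
    1 ≤ nE d C ε := (nE_mem d hd hC hε).1

noncomputable def c : ℝ := 2 * Real.log 2

lemma c_pos : 0 < c := by
  have := Real.log_pos (by norm_num : (1:ℝ) < 2)
  unfold c; linarith

lemma c_gt_one : 1 < c := by
  have := Real.log_two_gt_d9
  unfold c; linarith

lemma log_four : Real.log 4 = c := by
  rw [show (4:ℝ) = 2 ^ 2 by norm_num, Real.log_pow]
  unfold c; push_cast; ring

-- lower bound: log(2C) + log(1/ε) ≤ nE * c
lemma nE_lower (d : ℕ) (hd : 1 ≤ d) {C ε : ℝ} (hC : 0 < C) (hε : 0 < ε) :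
    Real.log (2 * C) + Real.log (1 / ε) ≤ (nE d C ε : ℝ) * c := by
  obtain ⟨h1, h2⟩ := nE_mem d hd hC hε
  have hA := one_le_A d hd (nE d C ε)
  have h3 : 2 * C / ε ≤ 4 ^ (nE d C ε) := by
    rw [div_le_iff₀ hε]
    nlinarith
  have h4 := Real.log_le_log (by positivity) h3
  rw [Real.log_div (by positivity) (by positivity), Real.log_pow, log_four] at h4
  rw [Real.log_div (by norm_num) (by positivity), Real.log_one]
  push_cast at h4 ⊢
  linarith

noncomputable def B' (d : ℕ) (C : ℝ) : ℝ := Real.log (2 * C * d) + c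

-- key upper: nE * c ≤ log(1/ε) + B' + (d-1) * log(nE + d)
lemma nE_key_upper (d : ℕ) (hd : 1 ≤ d) {C ε : ℝ} (hC : 0 < C) (hε : 0 < ε)
    (hε2 : ε < C / 2) :
    (nE d C ε : ℝ) * c ≤ Real.log (1 / ε) + B' d C +
      ((d : ℝ) - 1) * Real.log ((nE d C ε : ℝ) + d) := by
  set n := nE d C ε with hn
  have h2 : 2 ≤ n := two_le_nE d hd hC hε hε2
  have hrev := nE_rev d hd hC hε h2
  set m := n - 1 with hm
  have hm1 : 1 ≤ m := by omega
  have hA := A_le d hd m hm1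
  have hstep : ε / 2 * 4 ^ m < C * ((d : ℝ) * ((m : ℝ) + d) ^ (d - 1)) := by
    have := mul_le_mul_of_nonneg_left hA hC.le
    linarith
  have hlog := Real.log_lt_log (by positivity) hstep
  rw [Real.log_mul (by positivity) (by positivity), Real.log_pow, log_four,
    Real.log_mul (by positivity) (by positivity),
    Real.log_mul (by positivity) (by positivity), Real.log_pow] at hlog
  have hd1 : ((d - 1 : ℕ) : ℝ) = (d : ℝ) - 1 := by
    rw [Nat.cast_sub hd]; norm_num
  rw [hd1] at hlog
  have hlogdiv : Real.log (ε / 2) = -Real.log (1/ε) - Real.log 2 := by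
    rw [Real.log_div (by positivity) (by norm_num), Real.log_div (by norm_num) (by positivity),
      Real.log_one]
    ring
  rw [hlogdiv] at hlog
  have hmono : Real.log ((m : ℝ) + d) ≤ Real.log ((n : ℝ) + d) := by
    apply Real.log_le_log (by positivity)
    have : (m : ℝ) ≤ n := by exact_mod_cast Nat.sub_le n 1
    linarith
  have hlognn : 0 ≤ Real.log ((m : ℝ) + d) := by
    apply Real.log_nonneg
    have : (1:ℝ) ≤ (m:ℝ) := by exact_mod_cast hm1
    have : (1:ℝ) ≤ (d:ℝ) := by exact_mod_cast hd
    linarith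
  have hdm1 : (0:ℝ) ≤ (d:ℝ) - 1 := by
    have : (1:ℝ) ≤ (d:ℝ) := by exact_mod_cast hd
    linarith
  have hmn : (n : ℝ) = (m : ℝ) + 1 := by
    have : n = m + 1 := by omega
    exact_mod_cast congrArg (Nat.cast : ℕ → ℝ) this
  have hfin : ((d:ℝ)-1) * Real.log ((m:ℝ)+d) ≤ ((d:ℝ)-1) * Real.log ((n:ℝ)+d) :=
    mul_le_mul_of_nonneg_left hmono hdm1
  have hsplit : Real.log (2 * C * (d:ℝ)) = Real.log 2 + Real.log C + Real.log (d:ℝ) := by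
    rw [Real.log_mul (by positivity) (by positivity),
      Real.log_mul (by norm_num) (by positivity)]
  have hnc : (n:ℝ) * c = (m:ℝ) * c + c := by rw [hmn]; ring
  unfold B'
  linarith [hlog, hfin, hsplit, hnc]

-- linear bound on log
lemma log_le_lin {a y : ℝ} (ha : 0 < a) (hy : 0 < y) :
    Real.log y ≤ a * y - 1 - Real.log a := by
  have h := Real.log_le_sub_one_of_pos (show 0 < a * y by positivity)
  rw [Real.log_mul (ne_of_gt ha) (ne_of_gt hy)] at h
  linarith

noncomputable def B2 (d : ℕ) (C : ℝ) : ℝ :=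
  B' d C + (c / 2) * d + (d : ℝ) * (-1 - Real.log (c / (2 * d)))

lemma nE_crude (d : ℕ) (hd : 1 ≤ d) {C ε : ℝ} (hC : 0 < C) (hε : 0 < ε)
    (hε2 : ε < C / 2) :
    (nE d C ε : ℝ) ≤ (2 / c) * (Real.log (1 / ε) + B2 d C) := by
  set n := nE d C ε with hn
  have hkey := nE_key_upper d hd hC hε hε2
  have h2 : 2 ≤ n := two_le_nE d hd hC hε hε2
  have hd1 : (1:ℝ) ≤ (d:ℝ) := by exact_mod_cast hd
  have hn1 : (1:ℝ) ≤ (n:ℝ) := by exact_mod_cast (le_trans (by norm_num) h2)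
  have ha : 0 < c / (2 * (d:ℝ)) := div_pos c_pos (by linarith)
  have hy : 0 < (n : ℝ) + d := by linarith
  have hlin := log_le_lin ha hy
  have hlognn : 0 ≤ Real.log ((n : ℝ) + d) := Real.log_nonneg (by linarith)
  have hstep : ((d:ℝ) - 1) * Real.log ((n:ℝ)+d) ≤ (d:ℝ) * Real.log ((n:ℝ)+d) :=
    mul_le_mul_of_nonneg_right (by linarith) hlognn
  have hstep2 : (d:ℝ) * Real.log ((n:ℝ)+d) ≤
      (d:ℝ) * (c / (2*d) * ((n:ℝ)+d) - 1 - Real.log (c / (2*d))) :=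
    mul_le_mul_of_nonneg_left hlin (by linarith)
  have hdc : (d:ℝ) * (c / (2*d) * ((n:ℝ)+d)) = (c/2) * (n:ℝ) + (c/2) * d := by
    field_simp
  have hfin : (n:ℝ) * c ≤ Real.log (1/ε) + B2 d C + (c/2) * (n:ℝ) := by
    unfold B2
    nlinarith [hkey, hstep, hstep2, hdc]
  have hc := c_pos
  have heq : (2 / c) * (Real.log (1/ε) + B2 d C) = (Real.log (1/ε) + B2 d C) / (c/2) := by
    field_simp
  rw [heq, le_div_iff₀ (by linarith)]
  linarith

lemma tendsto_L : Tendsto (fun ε : ℝ => Real.log (1 / ε)) (nhdsWithin 0 (Ioi 0)) atTop := by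
  have h := Real.tendsto_log_nhdsGT_zero
  have h2 : Tendsto (fun ε : ℝ => -Real.log ε) (nhdsWithin 0 (Ioi 0)) atTop :=
    tendsto_neg_atBot_atTop.comp h
  refine h2.congr fun ε => ?_
  rw [one_div, Real.log_inv]

lemma tendsto_logdiv (q r : ℝ) (hq : 0 < q) :
    Tendsto (fun x : ℝ => Real.log (q * x + r) / x) atTop (nhds 0) := by
  have hupper : Tendsto (fun x : ℝ => Real.log (q + |r|) * x⁻¹ + Real.log x / x)
      atTop (nhds 0) := by
    have h1 : Tendsto (fun x : ℝ => Real.log (q + |r|) * x⁻¹) atTop (nhds 0) := by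
      simpa using tendsto_inv_atTop_zero.const_mul (Real.log (q + |r|))
    have h2 : Tendsto (fun x : ℝ => Real.log x / x) atTop (nhds 0) :=
      Real.isLittleO_log_id_atTop.tendsto_div_nhds_zero
    simpa using h1.add h2
  apply tendsto_of_tendsto_of_tendsto_of_le_of_le' tendsto_const_nhds hupper
  · filter_upwards [eventually_ge_atTop (max 1 ((1 + |r|) / q))] with x hx
    have hx1 : (1:ℝ) ≤ x := le_trans (le_max_left _ _) hx
    have hx2 : (1 + |r|) / q ≤ x := le_trans (le_max_right _ _) hx
    have harg : 1 ≤ q * x + r := by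
      rw [div_le_iff₀ hq] at hx2
      have : -|r| ≤ r := neg_abs_le r
      nlinarith
    have := Real.log_nonneg harg
    positivity
  · filter_upwards [eventually_ge_atTop (max 1 ((1 + |r|) / q))] with x hx
    have hx1 : (1:ℝ) ≤ x := le_trans (le_max_left _ _) hx
    have hx0 : (0:ℝ) < x := by linarith
    have harg : q * x + r ≤ (q + |r|) * x := by
      have h1 : r ≤ |r| := le_abs_self r
      have h2 : |r| * 1 ≤ |r| * x := by
        apply mul_le_mul_of_nonneg_left hx1 (abs_nonneg r)
      nlinarith
    have hpos : 0 < q * x + r := by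
      have hx2 : (1 + |r|) / q ≤ x := le_trans (le_max_right _ _) hx
      rw [div_le_iff₀ hq] at hx2
      have : -|r| ≤ r := neg_abs_le r
      nlinarith
    have hlog : Real.log (q * x + r) ≤ Real.log (q + |r|) + Real.log x := by
      calc Real.log (q * x + r) ≤ Real.log ((q + |r|) * x) := Real.log_le_log hpos harg
        _ = Real.log (q + |r|) + Real.log x := Real.log_mul (by positivity) (by positivity)
    rw [div_le_iff₀ hx0]
    calc Real.log (q * x + r) ≤ Real.log (q + |r|) + Real.log x := hlog
      _ = (Real.log (q + |r|) * x⁻¹ + Real.log x / x) * x := by field_simp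
lemma part1 (d : ℕ) (hd : 1 ≤ d) (C : ℝ) (hC : 0 < C) :
    Tendsto (fun ε : ℝ => ((nE d C ε : ℝ)) / ((1 / (2 * Real.log 2)) * Real.log (1 / ε)))
      (nhdsWithin 0 (Ioi 0)) (nhds 1) := by
  have hc := c_pos
  set q : ℝ := 2 / c with hq
  set r : ℝ := (2 / c) * B2 d C + d with hr
  have hq0 : 0 < q := by positivity
  -- bounding functions of x = L
  set G : ℝ → ℝ := fun x => ((Real.log (2 * C) + x) / c) / ((1 / c) * x) with hG
  set H : ℝ → ℝ := fun x =>
    ((x + B' d C + ((d : ℝ) - 1) * Real.log (q * x + r)) / c) / ((1 / c) * x) with hH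
  have hGt : Tendsto G atTop (nhds 1) := by
    have base : Tendsto (fun x : ℝ => 1 + Real.log (2 * C) * x⁻¹) atTop (nhds 1) := by
      have := tendsto_inv_atTop_zero (𝕜 := ℝ) |>.const_mul (Real.log (2 * C))
      simpa using tendsto_const_nhds.add this
    apply base.congr'
    filter_upwards [eventually_ge_atTop (1 : ℝ)] with x hx
    have hx0 : x ≠ 0 := by linarith
    have hc0 : c ≠ 0 := ne_of_gt hc
    simp only [hG]
    field_simp
    ring
  have hHt : Tendsto H atTop (nhds 1) := by
    have base : Tendsto (fun x : ℝ => 1 + B' d C * x⁻¹ +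
        ((d : ℝ) - 1) * (Real.log (q * x + r) / x)) atTop (nhds 1) := by
      have h1 := tendsto_inv_atTop_zero (𝕜 := ℝ) |>.const_mul (B' d C)
      have h2 := (tendsto_logdiv q r hq0).const_mul ((d : ℝ) - 1)
      have := (tendsto_const_nhds (α := ℝ) (x := (1:ℝ))).add h1 |>.add h2
      simpa using this
    apply base.congr'
    filter_upwards [eventually_ge_atTop (1 : ℝ)] with x hx
    have hx0 : x ≠ 0 := by linarith
    have hc0 : c ≠ 0 := ne_of_gt hc
    simp only [hH]
    field_simp
    try ring
  have hGL : Tendsto (fun ε : ℝ => G (Real.log (1 / ε))) (nhdsWithin 0 (Ioi 0)) (nhds 1) :=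
    hGt.comp tendsto_L
  have hHL : Tendsto (fun ε : ℝ => H (Real.log (1 / ε))) (nhdsWithin 0 (Ioi 0)) (nhds 1) :=
    hHt.comp tendsto_L
  have hδ : (0:ℝ) ∈ Ico (0:ℝ) (min (C / 2) 1) := ⟨le_refl 0, lt_min (by linarith) one_pos⟩
  have hmem : Ioo (0:ℝ) (min (C / 2) 1) ∈ nhdsWithin (0:ℝ) (Ioi 0) :=
    Ioo_mem_nhdsGT_of_mem hδ
  have hcoe : (fun ε : ℝ => ((nE d C ε : ℝ)) / ((1 / (2 * Real.log 2)) * Real.log (1 / ε)))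
      = fun ε : ℝ => ((nE d C ε : ℝ)) / ((1 / c) * Real.log (1 / ε)) := rfl
  rw [hcoe]
  apply tendsto_of_tendsto_of_tendsto_of_le_of_le' hGL hHL
  · filter_upwards [hmem] with ε hε
    obtain ⟨hε0, hεlt⟩ := hε
    have hε1 : ε < 1 := lt_of_lt_of_le hεlt (min_le_right _ _)
    have hL : 0 < Real.log (1 / ε) := Real.log_pos (by rw [lt_div_iff₀ hε0]; linarith)
    set L := Real.log (1 / ε)
    have hden : 0 < (1 / c) * L := by positivity
    have hlow := nE_lower d hd hC hε0
    simp only [hG]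
    rw [div_le_div_iff_of_pos_right hden, div_le_iff₀ hc]
    linarith
  · filter_upwards [hmem] with ε hε
    obtain ⟨hε0, hεlt⟩ := hε
    have hε1 : ε < 1 := lt_of_lt_of_le hεlt (min_le_right _ _)
    have hε2 : ε < C / 2 := lt_of_lt_of_le hεlt (min_le_left _ _)
    have hL : 0 < Real.log (1 / ε) := Real.log_pos (by rw [lt_div_iff₀ hε0]; linarith)
    set L := Real.log (1 / ε) with hLdef
    have hden : 0 < (1 / c) * L := by positivity
    have hkey := nE_key_upper d hd hC hε0 hε2
    have hcrude := nE_crude d hd hC hε0 hε2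
    have hne1 : 1 ≤ nE d C ε := one_le_nE d hd hC hε0
    have hne1' : (1:ℝ) ≤ (nE d C ε : ℝ) := by exact_mod_cast hne1
    have hd1 : (1:ℝ) ≤ (d:ℝ) := by exact_mod_cast hd
    have hmono : Real.log ((nE d C ε : ℝ) + d) ≤ Real.log (q * L + r) := by
      apply Real.log_le_log (by linarith)
      have : (2 / c) * (L + B2 d C) = q * L + (2 / c) * B2 d C := by rw [hq]; ring
      rw [hr]
      linarith [hcrude, this ▸ hcrude]
    have hstep : ((d:ℝ) - 1) * Real.log ((nE d C ε : ℝ) + d) ≤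
        ((d:ℝ) - 1) * Real.log (q * L + r) :=
      mul_le_mul_of_nonneg_left hmono (by linarith)
    simp only [hH]
    rw [div_le_div_iff_of_pos_right hden, le_div_iff₀ hc]
    linarith

lemma part2 (d : ℕ) (hd : 1 ≤ d) (C : ℝ) (hC : 0 < C) :
    ∃ K ε₀ : ℝ, 0 < K ∧ 0 < ε₀ ∧ ∀ ε : ℝ, 0 < ε → ε < ε₀ →
      (2 : ℝ) ^ (nE d C ε) ≤ K * ε ^ (-(1 : ℝ) / 2) *
        Real.log (1 / ε) ^ (((d : ℝ) - 1) / 2) := by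
  have hc := c_pos
  have hc1 := c_gt_one
  have hd1 : (1:ℝ) ≤ (d:ℝ) := by exact_mod_cast hd
  set T : ℝ := max 1 (max (d : ℝ) (B2 d C / (c - 1))) with hT
  refine ⟨Real.sqrt (8 * C * d * 3 ^ (d - 1)), min (C / 2) (Real.exp (-(T + 1))),
    Real.sqrt_pos.2 (by positivity), lt_min (by linarith) (Real.exp_pos _), ?_⟩
  intro ε hε0 hεlt
  have hε2 : ε < C / 2 := lt_of_lt_of_le hεlt (min_le_left _ _)
  have hεexp : ε < Real.exp (-(T + 1)) := lt_of_lt_of_le hεlt (min_le_right _ _)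
  have hLgt : T + 1 < Real.log (1 / ε) := by
    have := Real.log_lt_log hε0 hεexp
    rw [Real.log_exp] at this
    rw [one_div, Real.log_inv]
    linarith
  set L := Real.log (1 / ε) with hLdef
  have hT1 : (1:ℝ) ≤ T := le_max_left _ _
  have hTd : (d:ℝ) ≤ T := le_trans (le_max_left _ _) (le_max_right _ _)
  have hTB : B2 d C / (c - 1) ≤ T := le_trans (le_max_right _ _) (le_max_right _ _)
  have hL1 : (1:ℝ) ≤ L := by linarith
  have hLd : (d:ℝ) ≤ L := by linarith
  have hB2 : B2 d C ≤ (c - 1) * L := by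
    rw [div_le_iff₀ (by linarith)] at hTB
    nlinarith
  -- crude bound gives nE ≤ 2 L
  have hcrude := nE_crude d hd hC hε0 hε2
  have hnE2L : (nE d C ε : ℝ) ≤ 2 * L := by
    have h1 : (2 / c) * (L + B2 d C) ≤ (2 / c) * (c * L) := by
      apply mul_le_mul_of_nonneg_left _ (div_pos two_pos hc).le
      nlinarith
    have h2 : (2 / c) * (c * L) = 2 * L := by field_simp
    linarith
  -- main inequality
  have h2le := two_le_nE d hd hC hε0 hε2
  have hrev := nE_rev d hd hC hε0 h2le
  set n := nE d C ε with hn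
  set m := n - 1 with hm
  have hm1 : 1 ≤ m := by omega
  have hA := A_le d hd m hm1
  have hmn : (m:ℝ) ≤ (n:ℝ) := by exact_mod_cast Nat.sub_le n 1
  have hmd3L : (m:ℝ) + d ≤ 3 * L := by linarith
  have hpow : ((m:ℝ) + d) ^ (d - 1) ≤ (3 * L) ^ (d - 1) := by
    apply pow_le_pow_left₀ (by positivity) hmd3L
  have hX : ε / 2 * 4 ^ m < C * d * 3 ^ (d - 1) * L ^ (d - 1) := by
    have h1 : C * A d m ≤ C * ((d:ℝ) * ((m:ℝ) + d) ^ (d - 1)) :=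
      mul_le_mul_of_nonneg_left hA hC.le
    have h2 : C * ((d:ℝ) * ((m:ℝ) + d) ^ (d - 1)) ≤ C * ((d:ℝ) * (3 * L) ^ (d - 1)) := by
      apply mul_le_mul_of_nonneg_left _ hC.le
      exact mul_le_mul_of_nonneg_left hpow (by positivity)
    have h3 : C * ((d:ℝ) * (3 * L) ^ (d - 1)) = C * d * 3 ^ (d - 1) * L ^ (d - 1) := by
      rw [mul_pow]; ring
    linarith
  have h4n : (4:ℝ) ^ n ≤ 8 * C * d * 3 ^ (d - 1) * L ^ (d - 1) / ε := by
    have hnm : n = m + 1 := by omega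
    rw [hnm, pow_succ]
    rw [le_div_iff₀ hε0]
    nlinarith [pow_pos (show (0:ℝ) < 4 by norm_num) m]
  -- take square roots
  have hsq : ((2:ℝ) ^ n) ^ 2 = (4:ℝ) ^ n := by
    rw [← pow_mul, mul_comm, pow_mul]; norm_num
  have h2n : (2:ℝ) ^ n ≤ Real.sqrt (8 * C * d * 3 ^ (d - 1) * L ^ (d - 1) / ε) := by
    apply Real.le_sqrt_of_sq_le
    rw [hsq]; exact h4n
  have hL0 : (0:ℝ) < L := by linarith
  have hsplit : Real.sqrt (8 * C * d * 3 ^ (d - 1) * L ^ (d - 1) / ε)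
      = Real.sqrt (8 * C * d * 3 ^ (d - 1)) * ε ^ (-(1:ℝ)/2) * L ^ (((d:ℝ) - 1) / 2) := by
    have e1 : 8 * C * (d:ℝ) * 3 ^ (d - 1) * L ^ (d - 1) / ε
        = (8 * C * d * 3 ^ (d - 1)) * ε⁻¹ * L ^ (d - 1) := by ring
    rw [e1, Real.sqrt_mul (by positivity), Real.sqrt_mul (by positivity)]
    congr 1
    · congr 1
      rw [Real.sqrt_inv, show (-(1:ℝ)/2) = -(1/2 : ℝ) by norm_num,
        Real.rpow_neg hε0.le, Real.sqrt_eq_rpow]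
    · rw [← Real.rpow_natCast L (d - 1), Real.sqrt_eq_rpow, ← Real.rpow_mul hL0.le]
      congr 1
      rw [Nat.cast_sub hd]
      push_cast
      ring
  rw [hsplit] at h2n
  exact h2n


end Stmt18

/-- With `n_ε` the smallest `n ≥ 1` such that `C·2^{-2n}·A(d,n) ≤ ε/2`, where
`A(d,n) = ∑_{k<d} C(n+d-1,k)`: as `ε → 0⁺`, `n_ε ~ (1/(2 log 2))·log(1/ε)` and
`2^{n_ε} = O(ε^{-1/2}·(log(1/ε))^{(d-1)/2})`. -/
theorem stmt18 (d : ℕ) (hd : 1 ≤ d) (C : ℝ) (hC : 0 < C) :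
    let A : ℕ → ℝ := fun n => ∑ k ∈ Finset.range d, ((n + d - 1).choose k : ℝ)
    let nε : ℝ → ℕ := fun ε =>
      sInf {n : ℕ | 1 ≤ n ∧ C * (2 : ℝ) ^ (-(2 * (n : ℤ))) * A n ≤ ε / 2}
    Tendsto (fun ε : ℝ => (nε ε : ℝ) / ((1 / (2 * Real.log 2)) * Real.log (1 / ε)))
        (nhdsWithin 0 (Ioi 0)) (nhds 1) ∧
    ∃ K ε₀ : ℝ, 0 < K ∧ 0 < ε₀ ∧ ∀ ε : ℝ, 0 < ε → ε < ε₀ →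
      (2 : ℝ) ^ (nε ε) ≤ K * ε ^ (-(1 : ℝ) / 2) *
        Real.log (1 / ε) ^ (((d : ℝ) - 1) / 2) := by
  intro A nε
  exact ⟨Stmt18.part1 d hd C hC, Stmt18.part2 d hd C hC⟩
end
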